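/- For any planar tree t ∈ PT_n and any weight ω of length n, the Loday realization P_{(t,ω)} ⊆ ℝ^{n−1} satisfies: (1) it is contained in the hyperplane Σ_{i∈E(t)} x_i = Σ_{k<ℓ, k,ℓ∈V(t)} ω_k ω_ℓ; (2) for every nontrivial nest N of t and every maximal nesting 𝒩 of t, the point M(t,𝒩,ω) satisfies Σ_{i∈E(t(N))} x_i ≥ Σ_{k<ℓ, k,ℓ∈V(t(N))} ω_k ω_ℓ, with equality if and only if N ∈ 𝒩; (3) P_{(t,ω)} is exactly the intersection of the hyperplane of (1) with the half-spaces of (2) over all nontrivial nests N. -/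

import Mathlib

open scoped BigOperators

noncomputable section

/-- Vectors in `ℝⁿ`. -/
abbrev Vec (n : ℕ) := Fin n → ℝ

/-- The standard scalar product on `ℝⁿ`. -/
def dot {n : ℕ} (x y : Vec n) : ℝ := ∑ i, x i * y i

/-- A polytope is the convex hull of a finite set of points. -/
def IsPolytope {n : ℕ} (P : Set (Vec n)) : Prop :=
  ∃ S : Finset (Vec n), P = convexHull ℝ (S : Set (Vec n))

/-- A face of `P`: either `P` itself (take `c = 0`) or the subset of `P` where some linear
functional attains its maximum over `P`. -/
def IsFace {n : ℕ} (P F : Set (Vec n)) : Prop :=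
  ∃ c : Vec n, F = {x ∈ P | ∀ y ∈ P, dot c y ≤ dot c x}

/-- Dimension of a subset of `ℝⁿ`: the rank of the direction of its affine span. -/
noncomputable def sdim {n : ℕ} (A : Set (Vec n)) : ℕ :=
  Module.finrank ℝ (affineSpan ℝ A).direction

/-- The normal cone of a face `F` of `P`. -/
def normalCone {n : ℕ} (P F : Set (Vec n)) : Set (Vec n) :=
  {c | F ⊆ {x ∈ P | ∀ y ∈ P, dot c y ≤ dot c x}}

/-- `coneOf X`: nonnegative linear combinations of finitely many elements of `X`. -/
def coneOf {n : ℕ} (X : Set (Vec n)) : Set (Vec n) :=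
  {v | ∃ (k : ℕ) (x : Fin k → Vec n) (l : Fin k → ℝ),
      (∀ i, x i ∈ X) ∧ (∀ i, 0 ≤ l i) ∧ v = ∑ i, l i • x i}

/-- The reflection `ρ_z P = 2z - P` of `P` with respect to `z`. -/
def reflP {n : ℕ} (z : Vec n) (P : Set (Vec n)) : Set (Vec n) :=
  (fun x => (2 : ℝ) • z - x) '' P

/-- An edge is a 1-dimensional face. -/
def IsEdge {n : ℕ} (P E : Set (Vec n)) : Prop := IsFace P E ∧ sdim E = 1

/-- `(P, v)` is oriented if `v` is not perpendicular to any edge of `P`. -/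
def Oriented {n : ℕ} (P : Set (Vec n)) (v : Vec n) : Prop :=
  ∀ E, IsEdge P E → ∀ d ∈ (affineSpan ℝ E).direction, d ≠ 0 → dot d v ≠ 0

/-- `(P, v)` is positively oriented if `(P ∩ ρ_z P, v)` is oriented for every `z ∈ P`. -/
def PosOriented {n : ℕ} (P : Set (Vec n)) (v : Vec n) : Prop :=
  ∀ z ∈ P, Oriented (P ∩ reflP z P) v

/-- `x` is the minimizer of `⟨-, v⟩` on `P`. -/
def IsBotOf {n : ℕ} (P : Set (Vec n)) (v x : Vec n) : Prop :=
  x ∈ P ∧ ∀ y ∈ P, dot v x ≤ dot v y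

/-- `x` is the maximizer of `⟨-, v⟩` on `P`. -/
def IsTopOf {n : ℕ} (P : Set (Vec n)) (v x : Vec n) : Prop :=
  x ∈ P ∧ ∀ y ∈ P, dot v y ≤ dot v x

/-- `(P, v)` is quasi-oriented if `⟨-, v⟩` has a unique minimizer and a unique maximizer on `P`. -/
def QuasiOriented {n : ℕ} (P : Set (Vec n)) (v : Vec n) : Prop :=
  (∃! x, IsBotOf P v x) ∧ (∃! x, IsTopOf P v x)

/-- `(P, v)` is quasi-positively oriented if `(P ∩ ρ_z P, v)` is quasi-oriented for all `z ∈ P`. -/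
def QuasiPosOriented {n : ℕ} (P : Set (Vec n)) (v : Vec n) : Prop :=
  ∀ z ∈ P, QuasiOriented (P ∩ reflP z P) v

/-- The polytope `P^φ = π^φ(P × P) ⊆ ℝ^{n+1}`, where `π^φ(x,y) = ((x+y)/2, ⟨x - y, v⟩)`. -/
def Pphi {n : ℕ} (P : Set (Vec n)) (v : Vec n) : Set (Vec (n + 1)) :=
  {w | ∃ x ∈ P, ∃ y ∈ P, w = Fin.snoc ((1 / 2 : ℝ) • (x + y)) (dot (x - y) v)}

/-- The pair of faces `(F, G)` belongs to `F^φ`: there are no `x ∈ F`, `y ∈ G`, `λ > 0` with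
`(π(x,y), φ(x,y) - λ) ∈ P^φ`. -/
def InFphi {n : ℕ} (P : Set (Vec n)) (v : Vec n) (F G : Set (Vec n)) : Prop :=
  ¬ ∃ x ∈ F, ∃ y ∈ G, ∃ lam : ℝ, 0 < lam ∧
      (Fin.snoc ((1 / 2 : ℝ) • (x + y)) (dot (x - y) v - lam) : Vec (n + 1)) ∈ Pphi P v

/-- The set `(A + B)/2`. -/
def avgSet {n : ℕ} (A B : Set (Vec n)) : Set (Vec n) :=
  {z | ∃ x ∈ A, ∃ y ∈ B, z = (1 / 2 : ℝ) • (x + y)}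

/-- The coherent subdivision `π(F^φ)` is tight. -/
def TightSub {n : ℕ} (P : Set (Vec n)) (v : Vec n) : Prop :=
  ∀ F G : Set (Vec n), IsFace P F → IsFace P G → F.Nonempty → G.Nonempty →
    InFphi P v F G → sdim F + sdim G = sdim (avgSet F G)

/-- `d` is a direction of an edge of `P ∩ ρ_z P` for some `z ∈ P`; the hyperplanes of the
fundamental hyperplane arrangement `H_P` are the orthogonal complements of such directions. -/
def EdgeDir {n : ℕ} (P : Set (Vec n)) (d : Vec n) : Prop :=
  d ≠ 0 ∧ ∃ z ∈ P, ∃ E, IsEdge (P ∩ reflP z P) E ∧ d ∈ (affineSpan ℝ E).direction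

/-- The cone `cone(-N_P(F) ∪ N_P(G))`. -/
def diagCone {n : ℕ} (P F G : Set (Vec n)) : Set (Vec n) :=
  coneOf ((Neg.neg '' normalCone P F) ∪ normalCone P G)


/-- A planar rooted tree with `n` internal vertices labelled `0, …, n-1` in the clockwise-from-root
(depth-first preorder) order; `parent v` is the parent of the vertex `v`, the root being vertex `0`.
The internal edge `e : Fin (n-1)` connects the vertex `e+1` to its parent. -/
structure PTree (n : ℕ) where
  parent : Fin n → Fin n
  parent_zero : ∀ v : Fin n, v.val = 0 → parent v = v
  parent_lt : ∀ v : Fin n, 0 < v.val → (parent v).val < v.val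
  preorder : ∀ v w : Fin n, w.val = v.val + 1 → ∃ k : ℕ, parent^[k] v = parent w

/-- The child endpoint of the edge `e`: the vertex labelled `e + 1`. -/
def childV {n : ℕ} (e : Fin (n - 1)) : Fin n :=
  ⟨e.val + 1, by have h := e.isLt; omega⟩

/-- The vertices of the closure of a set of edges `N`, i.e. `V(t(N))`. -/
def nestVtx {n : ℕ} (t : PTree n) (N : Finset (Fin (n - 1))) : Finset (Fin n) :=
  N.biUnion fun e => {childV e, t.parent (childV e)}

/-- Two distinct edges are adjacent when they share a vertex. -/
def edgeAdj {n : ℕ} (t : PTree n) (e f : Fin (n - 1)) : Prop :=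
  e ≠ f ∧ (({childV e, t.parent (childV e)} ∩ {childV f, t.parent (childV f)} :
      Finset (Fin n))).Nonempty

instance {n : ℕ} (t : PTree n) (e f : Fin (n - 1)) : Decidable (edgeAdj t e f) := by
  unfold edgeAdj; infer_instance

/-- A nest: a set of edges whose closure is a connected subgraph (the trivial nest `E(t)` is
also allowed when `n = 1`, where it is empty). -/
def IsNest {n : ℕ} (t : PTree n) (N : Finset (Fin (n - 1))) : Prop :=
  (N.Nonempty ∨ N = Finset.univ) ∧
    ∀ e ∈ N, ∀ f ∈ N,
      Relation.ReflTransGen (fun a b => a ∈ N ∧ b ∈ N ∧ edgeAdj t a b) e f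

/-- A nesting: a set of nests containing the trivial nest, any two of which are nested or
disjoint, disjoint ones having no adjacent edges. -/
def IsNesting {n : ℕ} (t : PTree n) (𝒩 : Finset (Finset (Fin (n - 1)))) : Prop :=
  (∀ N ∈ 𝒩, IsNest t N) ∧ Finset.univ ∈ 𝒩 ∧
    ∀ N ∈ 𝒩, ∀ M ∈ 𝒩,
      N ⊆ M ∨ M ⊆ N ∨ (Disjoint N M ∧ ∀ e ∈ N, ∀ f ∈ M, ¬ edgeAdj t e f)

/-- A maximal nesting: a nesting of (maximal) cardinality `n - 1`. -/
def IsMaxNesting {n : ℕ} (t : PTree n) (𝒩 : Finset (Finset (Fin (n - 1)))) : Prop :=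
  IsNesting t 𝒩 ∧ 𝒩.card = n - 1

/-- `min 𝒩(i)`: the smallest nest of `𝒩` containing the edge `i` (the nests of a nesting
containing `i` being totally ordered, this is their intersection). -/
def minNest {n : ℕ} (𝒩 : Finset (Finset (Fin (n - 1)))) (i : Fin (n - 1)) :
    Finset (Fin (n - 1)) :=
  (𝒩.filter fun N => i ∈ N).inf id

/-- `u` is a weak ancestor of `w` (any ancestor is reached in at most `n` steps). -/
def isAnc {n : ℕ} (t : PTree n) (u w : Fin n) : Prop :=
  ∃ k ∈ Finset.range (n + 1), t.parent^[k] w = u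

instance {n : ℕ} (t : PTree n) (u w : Fin n) : Decidable (isAnc t u w) := by
  unfold isAnc; infer_instance

/-- `α_i`: the total weight of the subtree `t₁` of `t(min𝒩(i))` having the edge `i` as root. -/
def alphaN {n : ℕ} (t : PTree n) (𝒩 : Finset (Finset (Fin (n - 1))))
    (ω : Fin n → ℤ) (i : Fin (n - 1)) : ℤ :=
  ∑ w ∈ (nestVtx t (minNest 𝒩 i)).filter (fun w => isAnc t (childV i) w), ω w

/-- `β_i`: the total weight of the subtree `t₂` of `t(min𝒩(i))` having the edge `i` as a leaf. -/
def betaN {n : ℕ} (t : PTree n) (𝒩 : Finset (Finset (Fin (n - 1))))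
    (ω : Fin n → ℤ) (i : Fin (n - 1)) : ℤ :=
  ∑ w ∈ (nestVtx t (minNest 𝒩 i)).filter (fun w => ¬ isAnc t (childV i) w), ω w

/-- The point `M(t, 𝒩, ω) = (α₁β₁, …, α_{n-1}β_{n-1})`. -/
noncomputable def MPoint {n : ℕ} (t : PTree n) (𝒩 : Finset (Finset (Fin (n - 1))))
    (ω : Fin n → ℤ) : Vec (n - 1) :=
  fun i => ((alphaN t 𝒩 ω i : ℤ) : ℝ) * ((betaN t 𝒩 ω i : ℤ) : ℝ)

/-- The Loday realization `P_{(t,ω)}` of the operahedron. -/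
noncomputable def Loday {n : ℕ} (t : PTree n) (ω : Fin n → ℤ) : Set (Vec (n - 1)) :=
  convexHull ℝ {x | ∃ 𝒩, IsMaxNesting t 𝒩 ∧ x = MPoint t 𝒩 ω}

/-- The face of `P_{(t,ω)}` associated to a nesting `𝒩`: the convex hull of the points
`M(t,𝒩',ω)` over the maximal nestings `𝒩' ⊇ 𝒩`. -/
noncomputable def faceOfNesting {n : ℕ} (t : PTree n) (ω : Fin n → ℤ)
    (𝒩 : Finset (Finset (Fin (n - 1)))) : Set (Vec (n - 1)) :=
  convexHull ℝ {x | ∃ 𝒩', IsMaxNesting t 𝒩' ∧ 𝒩 ⊆ 𝒩' ∧ x = MPoint t 𝒩' ω}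

/-- A pair `(I, J) ∈ D(m)`: disjoint subsets of the same cardinality with `min (I ∪ J) ∈ I`. -/
def DPair {m : ℕ} (I J : Finset (Fin m)) : Prop :=
  I.card = J.card ∧ Disjoint I J ∧ ∃ i ∈ I, ∀ x ∈ I ∪ J, i ≤ x

/-- A trinary vector: all coordinates are `0`, `1` or `-1`. -/
def Trinary {m : ℕ} (u : Vec m) : Prop := ∀ i, u i = 0 ∨ u i = 1 ∨ u i = -1

/-- A balanced vector: same number of coordinates equal to `1` and to `-1`. -/
def BalancedVec {m : ℕ} (u : Vec m) : Prop :=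
  (Finset.univ.filter fun i => u i = 1).card = (Finset.univ.filter fun i => u i = -1).card

/-- The first nonzero coordinate is `1`. -/
def FirstPos {m : ℕ} (u : Vec m) : Prop :=
  ∀ i, u i ≠ 0 → (∀ j, j < i → u j = 0) → u i = 1
section TreeBasics

variable {n : ℕ} (t : PTree n)

lemma parent_val_le (v : Fin n) : (t.parent v).val ≤ v.val := by
  rcases Nat.eq_zero_or_pos v.val with h | h
  · rw [t.parent_zero v h]
  · exact le_of_lt (t.parent_lt v h)

lemma iterate_val_le (k : ℕ) (v : Fin n) : (t.parent^[k] v).val ≤ v.val := by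
  induction k with
  | zero => simp
  | succ k ih =>
      rw [Function.iterate_succ_apply']
      exact le_trans (parent_val_le t _) ih

lemma parent_fix {v : Fin n} (h : v.val = 0) : t.parent v = v := t.parent_zero v h

lemma iterate_fix {v : Fin n} (h : v.val = 0) (k : ℕ) : t.parent^[k] v = v := by
  induction k with
  | zero => rfl
  | succ k ih => rw [Function.iterate_succ_apply', ih, parent_fix t h]

lemma iterate_val_cases (k : ℕ) (v : Fin n) :
    (t.parent^[k] v).val = 0 ∨ (t.parent^[k] v).val + k ≤ v.val := by
  induction k with
  | zero => right; simp
  | succ k ih =>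
      rw [Function.iterate_succ_apply']
      rcases ih with h | h
      · left; rw [parent_fix t h]; exact h
      · rcases Nat.eq_zero_or_pos (t.parent^[k] v).val with h0 | h0
        · left; rw [parent_fix t h0]; exact h0
        · right; have := t.parent_lt _ h0; omega

lemma iterate_n_val (v : Fin n) : (t.parent^[n] v).val = 0 := by
  rcases iterate_val_cases t n v with h | h
  · exact h
  · have := v.isLt; omega

lemma iterate_stable {k : ℕ} (hk : n ≤ k) (v : Fin n) :
    t.parent^[k] v = t.parent^[n] v := by
  have : t.parent^[k] v = t.parent^[k - n] (t.parent^[n] v) := by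
    rw [← Function.iterate_add_apply]; congr 1; omega
  rw [this, iterate_fix t (iterate_n_val t v)]

lemma isAnc_iff {u w : Fin n} : isAnc t u w ↔ ∃ k, t.parent^[k] w = u := by
  constructor
  · rintro ⟨k, -, hk⟩; exact ⟨k, hk⟩
  · rintro ⟨k, hk⟩
    rcases le_or_gt k n with h | h
    · exact ⟨k, Finset.mem_range.2 (by omega), hk⟩
    · exact ⟨n, Finset.mem_range.2 (by omega), by rw [← iterate_stable t (le_of_lt h) w]; exact hk⟩

lemma isAnc_refl (v : Fin n) : isAnc t v v := (isAnc_iff t).2 ⟨0, rfl⟩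

lemma isAnc_trans {u v w : Fin n} (h1 : isAnc t u v) (h2 : isAnc t v w) : isAnc t u w := by
  rw [isAnc_iff] at *
  obtain ⟨a, ha⟩ := h1; obtain ⟨b, hb⟩ := h2
  exact ⟨a + b, by rw [Function.iterate_add_apply, hb, ha]⟩

lemma isAnc_val_le {u w : Fin n} (h : isAnc t u w) : u.val ≤ w.val := by
  rw [isAnc_iff] at h; obtain ⟨k, hk⟩ := h; rw [← hk]; exact iterate_val_le t k w

lemma iterate_eq_self_of_val_eq {k : ℕ} {w : Fin n} (h : ((t.parent^[k] w)).val = w.val) :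
    t.parent^[k] w = w := by
  induction k with
  | zero => rfl
  | succ k ih =>
      rw [Function.iterate_succ_apply'] at h ⊢
      have h1 : (t.parent (t.parent^[k] w)).val ≤ (t.parent^[k] w).val := parent_val_le t _
      have h2 : (t.parent^[k] w).val ≤ w.val := iterate_val_le t k w
      have h3 : (t.parent^[k] w).val = w.val := by omega
      rw [ih h3] at h ⊢
      rcases Nat.eq_zero_or_pos w.val with h0 | h0
      · exact parent_fix t h0
      · have := t.parent_lt w h0; omega

lemma isAnc_antisymm {u w : Fin n} (h1 : isAnc t u w) (h2 : isAnc t w u) : u = w := by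
  have e1 := isAnc_val_le t h1
  have e2 := isAnc_val_le t h2
  rw [isAnc_iff] at h1
  obtain ⟨k, hk⟩ := h1
  have : (t.parent^[k] w).val = w.val := by rw [hk]; omega
  rw [← hk, iterate_eq_self_of_val_eq t this]

lemma isAnc_of_parent {u w : Fin n} (h : isAnc t u (t.parent w)) : isAnc t u w := by
  rw [isAnc_iff] at *
  obtain ⟨k, hk⟩ := h
  exact ⟨k + 1, by rw [Function.iterate_add_apply]; exact hk⟩

lemma isAnc_parent_of_ne {u w : Fin n} (h : isAnc t u w) (hne : u ≠ w) :
    isAnc t u (t.parent w) := by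
  rw [isAnc_iff] at *
  obtain ⟨k, hk⟩ := h
  cases k with
  | zero => exact absurd hk.symm hne
  | succ k => exact ⟨k, by rw [← Function.iterate_succ_apply]; exact hk⟩

lemma isAnc_total {u v w : Fin n} (h1 : isAnc t u w) (h2 : isAnc t v w) :
    isAnc t u v ∨ isAnc t v u := by
  rw [isAnc_iff] at h1 h2
  obtain ⟨a, ha⟩ := h1; obtain ⟨b, hb⟩ := h2
  rcases le_total a b with h | h
  · right; refine (isAnc_iff t).2 ⟨b - a, ?_⟩
    rw [← ha, ← Function.iterate_add_apply, Nat.sub_add_cancel h, hb]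
  · left; refine (isAnc_iff t).2 ⟨a - b, ?_⟩
    rw [← hb, ← Function.iterate_add_apply, Nat.sub_add_cancel h, ha]

lemma isAnc_of_val_zero {u w : Fin n} (h : u.val = 0) : isAnc t u w := by
  rw [isAnc_iff]
  exact ⟨n, by apply Fin.ext; rw [iterate_n_val t w, h]⟩

lemma isAnc_parent_self (w : Fin n) : isAnc t (t.parent w) w := (isAnc_iff t).2 ⟨1, rfl⟩

lemma exists_child_on_chain {u w : Fin n} (h : isAnc t u w) (hne : u ≠ w) :
    ∃ v : Fin n, t.parent v = u ∧ isAnc t v w ∧ v ≠ u := by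
  rw [isAnc_iff] at h
  obtain ⟨k, hk⟩ := h
  induction k with
  | zero => exact absurd hk.symm hne
  | succ k ih =>
      by_cases hx : t.parent^[k] w = u
      · exact ih hx
      · refine ⟨t.parent^[k] w, ?_, (isAnc_iff t).2 ⟨k, rfl⟩, hx⟩
        rw [← Function.iterate_succ_apply' t.parent k w]; exact hk

end TreeBasics
section Edges

variable {n : ℕ} (t : PTree n)

lemma childV_val {e : Fin (n-1)} : (childV e : Fin n).val = e.val + 1 := rfl

lemma childV_inj : Function.Injective (childV (n := n)) := by
  intro a b h
  apply Fin.ext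
  have : (childV a : Fin n).val = (childV b : Fin n).val := by rw [h]
  simpa [childV_val] using this

/-- the edge whose child endpoint is `v` -/
def edgeOf {n : ℕ} (v : Fin n) (h : v.val ≠ 0) : Fin (n - 1) :=
  ⟨v.val - 1, by have := v.isLt; omega⟩

lemma childV_edgeOf {v : Fin n} (h : v.val ≠ 0) : childV (edgeOf v h) = v := by
  apply Fin.ext; simp [childV_val, edgeOf]; omega

lemma parent_childV_lt (e : Fin (n-1)) : (t.parent (childV e)).val < (childV e : Fin n).val :=
  t.parent_lt _ (by rw [childV_val]; omega)

lemma parent_childV_ne (e : Fin (n-1)) : t.parent (childV e) ≠ childV e := by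
  intro h
  have := parent_childV_lt t e
  rw [h] at this; omega

lemma not_isAnc_child_parent (e : Fin (n-1)) : ¬ isAnc t (childV e) (t.parent (childV e)) := by
  intro h
  have := isAnc_val_le t h
  have := parent_childV_lt t e
  omega

/-- `D e v`: the child endpoint of `e` is a weak ancestor of `v` (v is on the child side). -/
def Dside {n : ℕ} (t : PTree n) (e : Fin (n-1)) (v : Fin n) : Prop := isAnc t (childV e) v

instance {e : Fin (n-1)} {v : Fin n} : Decidable (Dside t e v) := by unfold Dside; infer_instance

lemma Dside_child (e : Fin (n-1)) : Dside t e (childV e) := isAnc_refl t _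

lemma not_Dside_parent (e : Fin (n-1)) : ¬ Dside t e (t.parent (childV e)) :=
  not_isAnc_child_parent t e

lemma Dside_endpoint_iff {e f : Fin (n-1)} (hne : e ≠ f) :
    (Dside t e (childV f) ↔ Dside t e (t.parent (childV f))) := by
  constructor
  · intro h
    exact isAnc_parent_of_ne t h (fun hc => hne (childV_inj hc))
  · intro h
    exact isAnc_of_parent t h

lemma mem_nestVtx {N : Finset (Fin (n-1))} {v : Fin n} :
    v ∈ nestVtx t N ↔ ∃ e ∈ N, v = childV e ∨ v = t.parent (childV e) := by
  simp [nestVtx, Finset.mem_biUnion, Finset.mem_insert, Finset.mem_singleton]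

lemma childV_mem_nestVtx {N : Finset (Fin (n-1))} {e : Fin (n-1)} (he : e ∈ N) :
    childV e ∈ nestVtx t N := (mem_nestVtx t).2 ⟨e, he, Or.inl rfl⟩

lemma parent_childV_mem_nestVtx {N : Finset (Fin (n-1))} {e : Fin (n-1)} (he : e ∈ N) :
    t.parent (childV e) ∈ nestVtx t N := (mem_nestVtx t).2 ⟨e, he, Or.inr rfl⟩

lemma nestVtx_mono {N M : Finset (Fin (n-1))} (h : N ⊆ M) : nestVtx t N ⊆ nestVtx t M := by
  intro v hv
  rw [mem_nestVtx] at hv ⊢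
  obtain ⟨e, he, hh⟩ := hv
  exact ⟨e, h he, hh⟩

lemma nestVtx_union (N M : Finset (Fin (n-1))) :
    nestVtx t (N ∪ M) = nestVtx t N ∪ nestVtx t M := by
  ext v
  simp only [mem_nestVtx, Finset.mem_union]
  constructor
  · rintro ⟨e, he | he, hh⟩
    · exact Or.inl ⟨e, he, hh⟩
    · exact Or.inr ⟨e, he, hh⟩
  · rintro (⟨e, he, hh⟩ | ⟨e, he, hh⟩)
    · exact ⟨e, Or.inl he, hh⟩
    · exact ⟨e, Or.inr he, hh⟩

/-- connectivity within an edge set -/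
abbrev EdgeConn {n : ℕ} (t : PTree n) (S : Finset (Fin (n-1))) (e f : Fin (n-1)) : Prop :=
  Relation.ReflTransGen (fun a b => a ∈ S ∧ b ∈ S ∧ edgeAdj t a b) e f

lemma edgeAdj_symm {e f : Fin (n-1)} (h : edgeAdj t e f) : edgeAdj t f e := by
  obtain ⟨hne, ⟨v, hv⟩⟩ := h
  exact ⟨hne.symm, ⟨v, by rw [Finset.mem_inter] at hv ⊢; exact hv.symm⟩⟩

lemma EdgeConn.mono {S S' : Finset (Fin (n-1))} (h : S ⊆ S') {e f : Fin (n-1)}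
    (hc : EdgeConn t S e f) : EdgeConn t S' e f := by
  refine Relation.ReflTransGen.mono ?_ _ _ hc
  rintro a b ⟨ha, hb, hab⟩
  exact ⟨h ha, h hb, hab⟩

lemma EdgeConn.symm {S : Finset (Fin (n-1))} {e f : Fin (n-1)}
    (hc : EdgeConn t S e f) : EdgeConn t S f e := by
  refine @Std.Symm.symm _ _ (@Relation.ReflTransGen.stdSymm _ _ ⟨?_⟩) _ _ hc
  rintro a b ⟨ha, hb, hab⟩
  exact ⟨hb, ha, edgeAdj_symm t hab⟩

lemma edgeAdj_of_shared {e f : Fin (n-1)} (hne : e ≠ f) (v : Fin n)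
    (hv1 : v = childV e ∨ v = t.parent (childV e)) (hv2 : v = childV f ∨ v = t.parent (childV f)) :
    edgeAdj t e f := by
  refine ⟨hne, ⟨v, ?_⟩⟩
  rw [Finset.mem_inter]
  constructor <;> simp only [Finset.mem_insert, Finset.mem_singleton]
  · exact hv1
  · exact hv2

/-- `Dside i` is constant on the vertices of an internally connected edge set avoiding `i`. -/
lemma Dside_const {S : Finset (Fin (n-1))}
    (hconn : ∀ e ∈ S, ∀ f ∈ S, EdgeConn t S e f) {i : Fin (n-1)} (hi : i ∉ S)
    {v w : Fin n} (hv : v ∈ nestVtx t S) (hw : w ∈ nestVtx t S) :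
    (Dside t i v ↔ Dside t i w) := by
  have key : ∀ e ∈ S, ∀ u : Fin n, (u = childV e ∨ u = t.parent (childV e)) →
      (Dside t i u ↔ Dside t i (childV e)) := by
    rintro e he u (rfl | rfl)
    · rfl
    · exact (Dside_endpoint_iff t (fun h => hi (by rw [h]; exact he))).symm
  have step : ∀ e f : Fin (n-1), (e ∈ S ∧ f ∈ S ∧ edgeAdj t e f) →
      (Dside t i (childV e) ↔ Dside t i (childV f)) := by
    rintro e f ⟨he, hf, hne, u, hu⟩
    rw [Finset.mem_inter] at hu
    simp only [Finset.mem_insert, Finset.mem_singleton] at hu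
    rw [← key e he u hu.1, ← key f hf u hu.2]
  rw [mem_nestVtx] at hv hw
  obtain ⟨e, he, hve⟩ := hv
  obtain ⟨f, hf, hwf⟩ := hw
  rw [key e he v hve, key f hf w hwf]
  have hc := hconn e he f hf
  clear hve hwf
  induction hc with
  | refl => rfl
  | tail hab hr ih => exact (ih hr.1).trans (step _ _ hr)

/-- an edge with both endpoints among the vertices of a connected edge set belongs to it -/
lemma mem_of_endpoints {S : Finset (Fin (n-1))}
    (hconn : ∀ e ∈ S, ∀ f ∈ S, EdgeConn t S e f) {e : Fin (n-1)}
    (h1 : childV e ∈ nestVtx t S) (h2 : t.parent (childV e) ∈ nestVtx t S) : e ∈ S := by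
  by_contra he
  have := Dside_const t hconn he h1 h2
  rw [iff_iff_implies_and_implies] at this
  exact not_Dside_parent t e (this.1 (Dside_child t e))

end Edges
section Sep

variable {n : ℕ} (t : PTree n)

/-- the set of edges separating `k` from `ℓ` (the path between them) -/
def sep {n : ℕ} (t : PTree n) (k ℓ : Fin n) : Finset (Fin (n-1)) :=
  Finset.univ.filter (fun e =>
    (Dside t e k ∧ ¬ Dside t e ℓ) ∨ (¬ Dside t e k ∧ Dside t e ℓ))

lemma mem_sep {k ℓ : Fin n} {e : Fin (n-1)} :
    e ∈ sep t k ℓ ↔ ((Dside t e k ∧ ¬ Dside t e ℓ) ∨ (¬ Dside t e k ∧ Dside t e ℓ)) := by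
  simp [sep]

lemma sep_symm (k ℓ : Fin n) : sep t k ℓ = sep t ℓ k := by
  ext e; rw [mem_sep, mem_sep]; tauto

lemma mem_sep_of_ne {k ℓ : Fin n} {e : Fin (n-1)} (h : e ∈ sep t k ℓ) :
    ¬ (Dside t e k ↔ Dside t e ℓ) := by
  rw [mem_sep] at h; tauto

lemma mem_sep_iff_not_iff {k ℓ : Fin n} {e : Fin (n-1)} :
    e ∈ sep t k ℓ ↔ ¬ (Dside t e k ↔ Dside t e ℓ) := by
  rw [mem_sep]; tauto

/-- the separating edges between two vertices of a connected edge set belong to it -/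
lemma sep_subset_of_conn {S : Finset (Fin (n-1))}
    (hconn : ∀ e ∈ S, ∀ f ∈ S, EdgeConn t S e f) {k ℓ : Fin n}
    (hk : k ∈ nestVtx t S) (hl : ℓ ∈ nestVtx t S) : sep t k ℓ ⊆ S := by
  intro e he
  by_contra hes
  exact mem_sep_of_ne t he (Dside_const t hconn hes hk hl)

/-- first endpoint lies among the vertices of the separating set -/
lemma mem_nestVtx_sep {k ℓ : Fin n} (hne : k ≠ ℓ) : k ∈ nestVtx t (sep t k ℓ) := by
  by_cases h : isAnc t k ℓ
  · -- k is a strict ancestor of ℓ; take the child of k towards ℓ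
    obtain ⟨v, hpv, hvl, hvne⟩ := exists_child_on_chain t h hne
    have hv0 : v.val ≠ 0 := by
      intro h0
      exact hvne (by rw [← hpv, parent_fix t h0])
    refine (mem_nestVtx t).2 ⟨edgeOf v hv0, ?_, Or.inr (by rw [childV_edgeOf hv0, hpv])⟩
    rw [mem_sep]
    right
    constructor
    · simp only [Dside]
      rw [childV_edgeOf hv0]
      intro hk2
      exact hvne (isAnc_antisymm t hk2 (hpv ▸ isAnc_parent_self t v))
    · simp only [Dside]; rw [childV_edgeOf hv0]; exact hvl
  · -- k is not an ancestor of ℓ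
    have hk0 : k.val ≠ 0 := fun h0 => h (isAnc_of_val_zero t h0)
    refine (mem_nestVtx t).2 ⟨edgeOf k hk0, ?_, Or.inl (childV_edgeOf hk0).symm⟩
    rw [mem_sep]
    left
    simp only [Dside]
    rw [childV_edgeOf hk0]
    exact ⟨isAnc_refl t k, h⟩

lemma sep_nonempty {k ℓ : Fin n} (hne : k ≠ ℓ) : (sep t k ℓ).Nonempty := by
  have := mem_nestVtx_sep t hne
  rw [mem_nestVtx] at this
  obtain ⟨e, he, -⟩ := this
  exact ⟨e, he⟩

/-- walking up the ancestor chain within one side of the path -/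
lemma sep_walk {k ℓ : Fin n} : ∀ (m : ℕ) (v w : Fin n), t.parent^[m] v = w →
    isAnc t w k → ¬ isAnc t w ℓ → isAnc t v k →
    ∀ e f : Fin (n-1), childV e = v → childV f = w → EdgeConn t (sep t k ℓ) e f := by
  intro m
  induction m with
  | zero =>
      intro v w hvw _ _ _ e f hev hfw
      cases childV_inj (hev.trans (hvw ▸ hfw.symm))
      exact Relation.ReflTransGen.refl
  | succ m ih =>
      intro v w hvw hwk hwl hvk e f hev hfw
      by_cases hvw2 : v = w
      · cases childV_inj (hev.trans (hvw2 ▸ hfw.symm))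
        exact Relation.ReflTransGen.refl
      · have hvl : ¬ isAnc t v ℓ := by
          intro hvl
          exact hwl (isAnc_trans t ((isAnc_iff t).2 ⟨m + 1, hvw⟩) hvl)
        set x := t.parent v with hx
        have hxw : t.parent^[m] x = w := by
          rw [hx, ← Function.iterate_succ_apply]; exact hvw
        have hx0 : x.val ≠ 0 := by
          intro h0
          apply hwl
          rw [← hxw, iterate_fix t h0, hx] at hwl ⊢
          exact isAnc_of_val_zero t h0
        have hxk : isAnc t x k := by
          rw [isAnc_iff] at hvk ⊢
          obtain ⟨a, ha⟩ := hvk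
          exact ⟨a + 1, by rw [Function.iterate_succ_apply', ha, hx]⟩
        have hxl : ¬ isAnc t x ℓ := by
          intro hxl
          exact hwl (isAnc_trans t ((isAnc_iff t).2 ⟨m, hxw⟩) hxl)
        have hvne0 : v.val ≠ 0 := by
          intro h0
          exact hvl (isAnc_of_val_zero t h0)
        have hes : e ∈ sep t k ℓ := by
          rw [mem_sep]; left; simp only [Dside]; rw [hev]; exact ⟨hvk, hvl⟩
        have hfs' : edgeOf x hx0 ∈ sep t k ℓ := by
          rw [mem_sep]; left; simp only [Dside]; rw [childV_edgeOf hx0]; exact ⟨hxk, hxl⟩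
        have hne : e ≠ edgeOf x hx0 := by
          intro hc
          have : v = x := by rw [← hev, hc, childV_edgeOf hx0]
          rw [hx] at this
          have : v.val = 0 ∨ (t.parent v).val < v.val := by
            rcases Nat.eq_zero_or_pos v.val with h0 | h0
            · exact Or.inl h0
            · exact Or.inr (t.parent_lt v h0)
          rcases this with h0 | hlt
          · exact hvne0 h0
          · rw [← ‹v = t.parent v›] at hlt; omega
        refine Relation.ReflTransGen.head ⟨hes, hfs', ?_⟩
          (ih x w hxw hwk hwl hxk (edgeOf x hx0) f (childV_edgeOf hx0) hfw)
        exact edgeAdj_of_shared t hne x (Or.inr (by rw [hev, hx])) (Or.inl (childV_edgeOf hx0).symm)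

/-- same-side connectivity in the separating set -/
lemma sep_same_side {k ℓ : Fin n} {v w : Fin n}
    (hvk : isAnc t v k) (hvl : ¬ isAnc t v ℓ) (hwk : isAnc t w k) (hwl : ¬ isAnc t w ℓ)
    {e f : Fin (n-1)} (hev : childV e = v) (hfw : childV f = w) :
    EdgeConn t (sep t k ℓ) e f := by
  rcases isAnc_total t hwk hvk with h | h
  ·
    obtain ⟨m, -, hm⟩ := h
    exact sep_walk t m v w hm hwk hwl hvk e f hev hfw
  · obtain ⟨m, -, hm⟩ := h
    exact (sep_walk t m w v hm hvk hvl hwk f e hfw hev).symm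

/-- least common ancestor -/
lemma exists_lca (k ℓ : Fin n) : ∃ u : Fin n, isAnc t u k ∧ isAnc t u ℓ ∧
    (∀ x : Fin n, isAnc t x k → isAnc t x ℓ → isAnc t x u) := by
  classical
  set CA : Finset (Fin n) := Finset.univ.filter (fun x => isAnc t x k ∧ isAnc t x ℓ) with hCA
  have hne : CA.Nonempty := by
    have hpos : 0 < n := k.pos
    refine ⟨⟨0, hpos⟩, ?_⟩
    rw [hCA, Finset.mem_filter]
    exact ⟨Finset.mem_univ _, isAnc_of_val_zero t rfl, isAnc_of_val_zero t rfl⟩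
  obtain ⟨u, hu, hmax⟩ := Finset.exists_max_image CA (fun x => x.val) hne
  rw [hCA, Finset.mem_filter] at hu
  refine ⟨u, hu.2.1, hu.2.2, ?_⟩
  intro x hxk hxl
  have hx : x ∈ CA := by rw [hCA, Finset.mem_filter]; exact ⟨Finset.mem_univ _, hxk, hxl⟩
  rcases isAnc_total t hu.2.1 hxk with h | h
  · -- isAnc u x
    have h1 := isAnc_val_le t h
    have h2 := hmax x hx
    have : u = x := by
      apply Fin.ext; omega
    rw [← this]; exact isAnc_refl t u
  · exact h

/-- construct the top edge of the `k`-side -/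
lemma top_edge {k l : Fin n} {u : Fin n} (huk : isAnc t u k) (hul : isAnc t u l)
    (humin : ∀ x : Fin n, isAnc t x k → isAnc t x l → isAnc t x u)
    {v : Fin n} (hvk : isAnc t v k) (hvl : ¬ isAnc t v l) :
    ∃ a : Fin n, isAnc t a k ∧ ¬ isAnc t a l ∧ t.parent a = u ∧ a.val ≠ 0 := by
  have hneuk : u ≠ k := by
    intro h
    rcases isAnc_total t huk hvk with h1 | h1
    · -- h1 : isAnc u v, i.e. u is an ancestor of v; with u = k and v anc of k get v = u
      have hvu : v = u := isAnc_antisymm t (h ▸ hvk) h1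
      exact hvl (hvu ▸ hul)
    · -- h1 : isAnc v u
      exact hvl (isAnc_trans t h1 hul)
  obtain ⟨a, hpa, hak, hane⟩ := exists_child_on_chain t huk hneuk
  have hal : ¬ isAnc t a l := by
    intro hal
    exact hane (isAnc_antisymm t (humin a hak hal) (hpa ▸ isAnc_parent_self t a))
  have ha0 : a.val ≠ 0 := fun h0 => hal (isAnc_of_val_zero t h0)
  exact ⟨a, hak, hal, hpa, ha0⟩

/-- the separating set is internally connected -/
lemma sep_conn {k l : Fin n} : ∀ e ∈ sep t k l, ∀ f ∈ sep t k l,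
    EdgeConn t (sep t k l) e f := by
  obtain ⟨u, huk, hul, humin⟩ := exists_lca t k l
  intro e he f hf
  rw [mem_sep] at he hf
  rcases he with ⟨hek, hel⟩ | ⟨hek, hel⟩ <;> rcases hf with ⟨hfk, hfl⟩ | ⟨hfk, hfl⟩
  · exact sep_same_side t hek hel hfk hfl rfl rfl
  · -- e on k-side, f on l-side
    obtain ⟨a, hak, hal, hpa, ha0⟩ := top_edge t huk hul humin hek hel
    obtain ⟨b, hbl, hbk, hpb, hb0⟩ := top_edge t hul huk (fun x h1 h2 => humin x h2 h1) hfl hfk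
    have hab : a ≠ b := by
      intro h; rw [h] at hak; exact hbk hak
    have heab : edgeOf a ha0 ≠ edgeOf b hb0 := by
      intro h
      apply hab
      rw [← childV_edgeOf ha0, h, childV_edgeOf hb0]
    have hma : edgeOf a ha0 ∈ sep t k l := by
      rw [mem_sep]; left; simp only [Dside]; rw [childV_edgeOf ha0]; exact ⟨hak, hal⟩
    have hmb : edgeOf b hb0 ∈ sep t k l := by
      rw [mem_sep]; right; simp only [Dside]; rw [childV_edgeOf hb0]; exact ⟨hbk, hbl⟩
    have c1 : EdgeConn t (sep t k l) e (edgeOf a ha0) :=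
      sep_same_side t hek hel hak hal rfl (childV_edgeOf ha0)
    have c3 : EdgeConn t (sep t k l) (edgeOf b hb0) f := by
      have : EdgeConn t (sep t l k) f (edgeOf b hb0) :=
        sep_same_side t hfl hfk hbl hbk rfl (childV_edgeOf hb0)
      rw [sep_symm t l k] at this
      exact EdgeConn.symm t this
    have c2 : EdgeConn t (sep t k l) (edgeOf a ha0) (edgeOf b hb0) := by
      refine Relation.ReflTransGen.single ⟨hma, hmb, ?_⟩
      refine edgeAdj_of_shared t heab u (Or.inr ?_) (Or.inr ?_)
      · rw [childV_edgeOf ha0, hpa]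
      · rw [childV_edgeOf hb0, hpb]
    exact (c1.trans c2).trans c3
  · -- e on l-side, f on k-side: symmetric
    obtain ⟨a, hak, hal, hpa, ha0⟩ := top_edge t huk hul humin hfk hfl
    obtain ⟨b, hbl, hbk, hpb, hb0⟩ := top_edge t hul huk (fun x h1 h2 => humin x h2 h1) hel hek
    have hab : a ≠ b := by
      intro h; rw [h] at hak; exact hbk hak
    have heab : edgeOf a ha0 ≠ edgeOf b hb0 := by
      intro h
      apply hab
      rw [← childV_edgeOf ha0, h, childV_edgeOf hb0]
    have hma : edgeOf a ha0 ∈ sep t k l := by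
      rw [mem_sep]; left; simp only [Dside]; rw [childV_edgeOf ha0]; exact ⟨hak, hal⟩
    have hmb : edgeOf b hb0 ∈ sep t k l := by
      rw [mem_sep]; right; simp only [Dside]; rw [childV_edgeOf hb0]; exact ⟨hbk, hbl⟩
    have c1 : EdgeConn t (sep t k l) (edgeOf a ha0) f :=
      sep_same_side t hak hal hfk hfl (childV_edgeOf ha0) rfl
    have c3 : EdgeConn t (sep t k l) e (edgeOf b hb0) := by
      have : EdgeConn t (sep t l k) e (edgeOf b hb0) :=
        sep_same_side t hel hek hbl hbk rfl (childV_edgeOf hb0)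
      rw [sep_symm t l k] at this
      exact this
    have c2 : EdgeConn t (sep t k l) (edgeOf b hb0) (edgeOf a ha0) := by
      refine Relation.ReflTransGen.single ⟨hmb, hma, ?_⟩
      refine edgeAdj_of_shared t heab.symm u (Or.inr ?_) (Or.inr ?_)
      · rw [childV_edgeOf hb0, hpb]
      · rw [childV_edgeOf ha0, hpa]
    exact (c3.trans c2).trans c1
  · -- both on l-side
    have : EdgeConn t (sep t l k) e f := sep_same_side t hel hek hfl hfk rfl rfl
    rw [sep_symm t l k] at this
    exact this

/-- two edges whose separating path lies in `K` are connected within `K` (given they belong) -/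
lemma conn_of_sep_subset {K : Finset (Fin (n-1))} {c d : Fin (n-1)}
    (hc : c ∈ K) (hd : d ∈ K) (hK : sep t (childV c) (childV d) ⊆ K) :
    EdgeConn t K c d := by
  by_cases hcd : (childV c : Fin n) = childV d
  · cases childV_inj hcd; exact Relation.ReflTransGen.refl
  · set S := sep t (childV c) (childV d) with hS
    have hkv : (childV c : Fin n) ∈ nestVtx t S := mem_nestVtx_sep t hcd
    have hlv : (childV d : Fin n) ∈ nestVtx t S := by
      rw [hS, sep_symm]
      exact mem_nestVtx_sep t (Ne.symm hcd)
    rw [mem_nestVtx] at hkv hlv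
    obtain ⟨e, heS, hce⟩ := hkv
    obtain ⟨f, hfS, hdf⟩ := hlv
    have step1 : EdgeConn t K c e := by
      by_cases hce2 : c = e
      · rw [hce2]
      · exact Relation.ReflTransGen.single
          ⟨hc, hK heS, edgeAdj_of_shared t hce2 (childV c) (Or.inl rfl) hce⟩
    have step3 : EdgeConn t K f d := by
      by_cases hdf2 : d = f
      · rw [hdf2]
      · exact EdgeConn.symm t (Relation.ReflTransGen.single
          ⟨hd, hK hfS, edgeAdj_of_shared t hdf2 (childV d) (Or.inl rfl) hdf⟩)
    have step2 : EdgeConn t K e f := EdgeConn.mono t hK (sep_conn t e heS f hfS)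
    exact (step1.trans step2).trans step3

end Sep
section MinNest

variable {n : ℕ} (t : PTree n) {𝒩 : Finset (Finset (Fin (n - 1)))}

/-- in a pairwise-comparable nonempty family the infimum is attained -/
lemma inf_mem_of_chain {α : Type*} [Fintype α] [DecidableEq α] {s : Finset (Finset α)} (hs : s.Nonempty)
    (hcomp : ∀ A ∈ s, ∀ B ∈ s, A ⊆ B ∨ B ⊆ A) :
    s.inf id ∈ s ∧ ∀ A ∈ s, s.inf id ⊆ A := by
  classical
  obtain ⟨m, hm, hmin⟩ : ∃ m ∈ s, ∀ x ∈ s, ¬ x < m := by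
    obtain ⟨m, hm⟩ := Finset.exists_minimal hs
    exact ⟨m, hm.1, fun x hx hlt => hlt.not_ge (hm.2 hx hlt.le)⟩
  have hmle : ∀ A ∈ s, m ⊆ A := by
    intro A hA
    rcases hcomp A hA m hm with h | h
    · rcases eq_or_ne A m with rfl | hne
      · exact Finset.Subset.refl _
      · exact absurd (lt_of_le_of_ne h hne) (hmin A hA)
    · exact h
  have : s.inf id = m := by
    apply le_antisymm
    · exact Finset.inf_le hm
    · exact Finset.le_inf (fun A hA => hmle A hA)
  rw [this]
  exact ⟨hm, hmle⟩

lemma nests_comparable (hN : IsNesting t 𝒩) {A B : Finset (Fin (n-1))}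
    (hA : A ∈ 𝒩) (hB : B ∈ 𝒩) {e f : Fin (n-1)} (he : e ∈ A) (hf : f ∈ B)
    (hadj : e = f ∨ edgeAdj t e f) : A ⊆ B ∨ B ⊆ A := by
  rcases hN.2.2 A hA B hB with h | h | ⟨hd, hna⟩
  · exact Or.inl h
  · exact Or.inr h
  · exfalso
    rcases hadj with rfl | hadj
    · exact (Finset.disjoint_left.1 hd) he hf
    · exact hna e he f hf hadj

lemma minNest_spec (hN : IsNesting t 𝒩) (i : Fin (n-1)) :
    minNest 𝒩 i ∈ 𝒩 ∧ i ∈ minNest 𝒩 i ∧ ∀ M ∈ 𝒩, i ∈ M → minNest 𝒩 i ⊆ M := by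
  classical
  set s := 𝒩.filter (fun N => i ∈ N) with hs
  have hsne : s.Nonempty := ⟨Finset.univ, by
    rw [hs, Finset.mem_filter]; exact ⟨hN.2.1, Finset.mem_univ i⟩⟩
  have hcomp : ∀ A ∈ s, ∀ B ∈ s, A ⊆ B ∨ B ⊆ A := by
    intro A hA B hB
    rw [hs, Finset.mem_filter] at hA hB
    exact nests_comparable t hN hA.1 hB.1 hA.2 hB.2 (Or.inl rfl)
  obtain ⟨hmem, hle⟩ := inf_mem_of_chain hsne hcomp
  rw [hs, Finset.mem_filter] at hmem
  refine ⟨hmem.1, hmem.2, ?_⟩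
  intro M hM hiM
  exact hle M (by rw [hs, Finset.mem_filter]; exact ⟨hM, hiM⟩)

lemma minNest_mem (hN : IsNesting t 𝒩) (i : Fin (n-1)) : minNest 𝒩 i ∈ 𝒩 :=
  (minNest_spec t hN i).1

lemma mem_minNest (hN : IsNesting t 𝒩) (i : Fin (n-1)) : i ∈ minNest 𝒩 i :=
  (minNest_spec t hN i).2.1

lemma minNest_min (hN : IsNesting t 𝒩) {i : Fin (n-1)} {M : Finset (Fin (n-1))}
    (hM : M ∈ 𝒩) (hi : i ∈ M) : minNest 𝒩 i ⊆ M :=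
  (minNest_spec t hN i).2.2 M hM hi

/-- main structural lemma: a connected edge set is contained in the minimal nest of
its element maximizing the cardinality of the minimal nest -/
lemma conn_subset_maxMinNest (hN : IsNesting t 𝒩) {S : Finset (Fin (n-1))}
    (hconn : ∀ e ∈ S, ∀ f ∈ S, EdgeConn t S e f) {i : Fin (n-1)} (hi : i ∈ S)
    (hmax : ∀ j ∈ S, (minNest 𝒩 j).card ≤ (minNest 𝒩 i).card) :
    ∀ j ∈ S, j ∈ minNest 𝒩 i := by
  intro j hj
  have hc := hconn i hi j hj
  clear hj
  induction hc with
  | refl => exact mem_minNest t hN i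
  | @tail b c hab hr ih =>
      obtain ⟨hbS, hcS, hadj⟩ := hr
      have hb : b ∈ minNest 𝒩 i := ih
      rcases nests_comparable t hN (minNest_mem t hN i) (minNest_mem t hN c)
          hb (mem_minNest t hN c) (Or.inr hadj) with h | h
      · -- minNest i ⊆ minNest c, so cards equal, sets equal
        have h1 : (minNest 𝒩 i).card ≤ (minNest 𝒩 c).card := Finset.card_le_card h
        have h2 := hmax c hcS
        have : minNest 𝒩 i = minNest 𝒩 c := Finset.eq_of_subset_of_card_le h (by omega)
        rw [this]
        exact mem_minNest t hN c
      · exact h (mem_minNest t hN c)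

lemma exists_max_minNest {S : Finset (Fin (n-1))} (hS : S.Nonempty) :
    ∃ i ∈ S, ∀ j ∈ S, (minNest 𝒩 j).card ≤ (minNest 𝒩 i).card := by
  obtain ⟨i, hi, h⟩ := Finset.exists_max_image S (fun j => (minNest 𝒩 j).card) hS
  exact ⟨i, hi, h⟩

/-- every nest of a nesting is the minimal nest of one of its edges -/
lemma minNest_surj (hn : 2 ≤ n) (hN : IsNesting t 𝒩) {M : Finset (Fin (n-1))}
    (hM : M ∈ 𝒩) : ∃ i ∈ M, minNest 𝒩 i = M := by
  have hMne : M.Nonempty := by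
    rcases (hN.1 M hM).1 with h | h
    · exact h
    · rw [h]
      exact ⟨⟨0, by omega⟩, Finset.mem_univ _⟩
  obtain ⟨i, hi, hmax⟩ := exists_max_minNest (𝒩 := 𝒩) hMne
  have hsub : ∀ j ∈ M, j ∈ minNest 𝒩 i :=
    conn_subset_maxMinNest t hN (hN.1 M hM).2 hi hmax
  refine ⟨i, hi, ?_⟩
  apply Finset.Subset.antisymm
  · exact minNest_min t hN hM hi
  · intro j hj
    exact hsub j hj

lemma nesting_card_le (hn : 2 ≤ n) (hN : IsNesting t 𝒩) : 𝒩.card ≤ n - 1 := by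
  classical
  have hsub : 𝒩 ⊆ Finset.univ.image (fun i => minNest 𝒩 i) := by
    intro M hM
    obtain ⟨i, -, hi⟩ := minNest_surj t hn hN hM
    exact Finset.mem_image.2 ⟨i, Finset.mem_univ _, hi⟩
  calc 𝒩.card ≤ (Finset.univ.image (fun i => minNest 𝒩 i)).card := Finset.card_le_card hsub
    _ ≤ (Finset.univ : Finset (Fin (n-1))).card := Finset.card_image_le
    _ = n - 1 := by simp

/-- for a maximal nesting, `minNest` is injective -/
lemma minNest_inj (hn : 2 ≤ n) (hmax : IsMaxNesting t 𝒩) :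
    Function.Injective (fun i : Fin (n-1) => minNest 𝒩 i) := by
  classical
  have hN := hmax.1
  have himg : Finset.univ.image (fun i => minNest 𝒩 i) = 𝒩 := by
    apply Finset.Subset.antisymm
    · intro M hM
      obtain ⟨i, -, hi⟩ := Finset.mem_image.1 hM
      rw [← hi]
      exact minNest_mem t hN i
    · intro M hM
      obtain ⟨i, -, hi⟩ := minNest_surj t hn hN hM
      exact Finset.mem_image.2 ⟨i, Finset.mem_univ _, hi⟩
  have hcard : (Finset.univ.image (fun i => minNest 𝒩 i)).card
      = (Finset.univ : Finset (Fin (n-1))).card := by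
    rw [himg, hmax.2]; simp
  have hinj := Finset.injOn_of_card_image_eq hcard
  intro a b hab
  exact hinj (Finset.mem_coe.2 (Finset.mem_univ a)) (Finset.mem_coe.2 (Finset.mem_univ b)) hab

end MinNest
section Counting

variable {n : ℕ} (t : PTree n) {𝒩 : Finset (Finset (Fin (n - 1)))} (ω : Fin n → ℤ)

/-- the set of edges `i` such that the pair `{k,ℓ}` is in `V(min(i))` and `i` separates them -/
def Tset {n : ℕ} (t : PTree n) (𝒩 : Finset (Finset (Fin (n - 1)))) (k l : Fin n) :
    Finset (Fin (n-1)) :=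
  Finset.univ.filter (fun i => k ∈ nestVtx t (minNest 𝒩 i) ∧ l ∈ nestVtx t (minNest 𝒩 i) ∧
    i ∈ sep t k l)

lemma sep_subset_minNest (hN : IsNesting t 𝒩) {k l : Fin n} {i : Fin (n-1)}
    (hk : k ∈ nestVtx t (minNest 𝒩 i)) (hl : l ∈ nestVtx t (minNest 𝒩 i)) :
    sep t k l ⊆ minNest 𝒩 i :=
  sep_subset_of_conn t (hN.1 _ (minNest_mem t hN i)).2 hk hl

lemma Tset_card (hn : 2 ≤ n) (hmax : IsMaxNesting t 𝒩) {k l : Fin n} (hne : k ≠ l) :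
    (Tset t 𝒩 k l).card = 1 := by
  classical
  have hN := hmax.1
  rw [Finset.card_eq_one]
  -- existence
  obtain ⟨i, hiS, himax⟩ := exists_max_minNest (𝒩 := 𝒩) (sep_nonempty t hne)
  have hSsub : ∀ j ∈ sep t k l, j ∈ minNest 𝒩 i :=
    conn_subset_maxMinNest t hN (sep_conn t) hiS himax
  have hkV : k ∈ nestVtx t (minNest 𝒩 i) :=
    nestVtx_mono t (fun j hj => hSsub j hj) (mem_nestVtx_sep t hne)
  have hlV : l ∈ nestVtx t (minNest 𝒩 i) := by
    refine nestVtx_mono t (fun j hj => hSsub j hj) ?_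
    rw [sep_symm]
    exact mem_nestVtx_sep t (Ne.symm hne)
  have hiT : i ∈ Tset t 𝒩 k l := by
    rw [Tset, Finset.mem_filter]
    exact ⟨Finset.mem_univ _, hkV, hlV, hiS⟩
  refine ⟨i, ?_⟩
  -- uniqueness
  apply Finset.eq_singleton_iff_unique_mem.2
  refine ⟨hiT, ?_⟩
  intro j hj
  rw [Tset, Finset.mem_filter] at hj
  obtain ⟨-, hkVj, hlVj, hjS⟩ := hj
  have h1 : minNest 𝒩 j ⊆ minNest 𝒩 i :=
    minNest_min t hN (minNest_mem t hN i) (sep_subset_minNest t hN hkV hlV hjS)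
  have h2 : minNest 𝒩 i ⊆ minNest 𝒩 j :=
    minNest_min t hN (minNest_mem t hN j) (sep_subset_minNest t hN hkVj hlVj hiS)
  exact minNest_inj t hn hmax (Finset.Subset.antisymm h1 h2)

/-- weighted pair count of a vertex set -/
def ccZ {n : ℕ} (ω : Fin n → ℤ) (A : Finset (Fin n)) : ℤ :=
  ∑ p ∈ (A ×ˢ A).filter (fun p => p.1 < p.2), ω p.1 * ω p.2

/-- the number of edges of `N` counting the pair `p` -/
def cnt2 {n : ℕ} (t : PTree n) (𝒩 : Finset (Finset (Fin (n - 1))))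
    (N : Finset (Fin (n-1))) (p : Fin n × Fin n) : ℕ :=
  (N.filter (fun i => p.1 ∈ nestVtx t (minNest 𝒩 i) ∧ p.2 ∈ nestVtx t (minNest 𝒩 i) ∧
    i ∈ sep t p.1 p.2)).card

set_option maxHeartbeats 1000000 in
/-- decomposition of the sum of `αᵢβᵢ` over an edge set `N` -/
lemma sum_alphabeta (hn : 2 ≤ n) (hmax : IsMaxNesting t 𝒩) (N : Finset (Fin (n-1)))
    (hNa : ∀ e, e ∉ N → ∀ v ∈ nestVtx t N, ∀ w ∈ nestVtx t N, (Dside t e v ↔ Dside t e w)) :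
    ∑ i ∈ N, alphaN t 𝒩 ω i * betaN t 𝒩 ω i
      = ccZ ω (nestVtx t N)
        + ∑ p ∈ (Finset.univ ×ˢ Finset.univ).filter
            (fun p : Fin n × Fin n => p.1 < p.2 ∧
              ¬(p.1 ∈ nestVtx t N ∧ p.2 ∈ nestVtx t N)),
            (ω p.1 * ω p.2) * (cnt2 t 𝒩 N p : ℤ) := by
  classical
  set U2 : Finset (Fin n × Fin n) := Finset.univ ×ˢ Finset.univ with hU2
  set cond : Fin (n-1) → Fin n × Fin n → Prop := fun i p =>
    p.1 ∈ nestVtx t (minNest 𝒩 i) ∧ p.2 ∈ nestVtx t (minNest 𝒩 i) ∧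
    isAnc t (childV i) p.1 ∧ ¬ isAnc t (childV i) p.2 with hcond
  have stepA : ∀ i, alphaN t 𝒩 ω i * betaN t 𝒩 ω i
      = ∑ p ∈ U2.filter (cond i), ω p.1 * ω p.2 := by
    intro i
    rw [alphaN, betaN, Finset.sum_mul_sum, ← Finset.sum_product']
    apply Finset.sum_congr ?_ (fun _ _ => rfl)
    ext p
    simp only [Finset.mem_product, Finset.mem_filter, hU2, hcond, Finset.mem_univ, true_and]
    tauto
  rw [Finset.sum_congr rfl (fun i _ => stepA i)]
  -- swap sums
  have stepB : ∑ i ∈ N, ∑ p ∈ U2.filter (cond i), ω p.1 * ω p.2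
      = ∑ p ∈ U2, (ω p.1 * ω p.2) * ((N.filter (fun i => cond i p)).card : ℤ) := by
    have : ∀ i ∈ N, ∑ p ∈ U2.filter (cond i), ω p.1 * ω p.2
        = ∑ p ∈ U2, if cond i p then ω p.1 * ω p.2 else 0 := by
      intro i _
      rw [Finset.sum_filter]
    rw [Finset.sum_congr rfl this, Finset.sum_comm]
    apply Finset.sum_congr rfl
    intro p _
    rw [← Finset.sum_filter, Finset.sum_const, nsmul_eq_mul, mul_comm]
  rw [stepB]
  -- kill the diagonal, then fold the two orientations
  set g : Fin n × Fin n → ℤ := fun p => (ω p.1 * ω p.2) * ((N.filter (fun i => cond i p)).card : ℤ)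
    with hg
  have hdiag : ∀ p : Fin n × Fin n, p.1 = p.2 → (N.filter (fun i => cond i p)) = ∅ := by
    intro p hp
    apply Finset.filter_false_of_mem
    intro i _
    rw [hcond]
    rintro ⟨-, -, h1, h2⟩
    rw [hp] at h1
    exact h2 h1
  have split1 : ∑ p ∈ U2, g p
      = ∑ p ∈ U2.filter (fun p => p.1 < p.2), g p
        + ∑ p ∈ U2.filter (fun p => p.2 < p.1), g p := by
    rw [← Finset.sum_filter_add_sum_filter_not U2 (fun p => p.1 < p.2) g]
    congr 1
    rw [← Finset.sum_filter_add_sum_filter_not (U2.filter (fun p => ¬ p.1 < p.2))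
      (fun p => p.1 = p.2) g]
    have hz : ∑ p ∈ (U2.filter (fun p => ¬ p.1 < p.2)).filter (fun p => p.1 = p.2), g p = 0 := by
      apply Finset.sum_eq_zero
      intro p hp
      rw [Finset.mem_filter] at hp
      rw [hg]
      simp [hdiag p hp.2]
    rw [hz, zero_add]
    apply Finset.sum_congr ?_ (fun _ _ => rfl)
    rw [Finset.filter_filter]
    apply Finset.filter_congr
    intro p _
    constructor
    · rintro ⟨h1, h2⟩
      rcases lt_trichotomy p.1 p.2 with h | h | h
      · exact absurd h h1
      · exact absurd h h2
      · exact h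
    · intro h
      exact ⟨fun h2 => absurd (h.trans h2) (lt_irrefl _), fun h2 => absurd (h2 ▸ h) (lt_irrefl _)⟩
  have swapmem : ∀ p : Fin n × Fin n, p ∈ U2.filter (fun p => p.2 < p.1) →
      Prod.swap p ∈ U2.filter (fun p => p.1 < p.2) := by
    intro p hp
    rw [Finset.mem_filter] at hp ⊢
    exact ⟨by simp [hU2], by simpa using hp.2⟩
  have split2 : ∑ p ∈ U2.filter (fun p => p.2 < p.1), g p
      = ∑ p ∈ U2.filter (fun p => p.1 < p.2), g (Prod.swap p) := by
    apply Finset.sum_nbij' (i := fun p => Prod.swap p) (j := fun p => Prod.swap p)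
    · exact swapmem
    · intro p hp
      rw [Finset.mem_filter] at hp ⊢
      exact ⟨by simp [hU2], by simpa using hp.2⟩
    · intro p _; simp
    · intro p _; simp
    · intro p _; rfl
  rw [split1, split2, ← Finset.sum_add_distrib]
  -- now identify each combined term with cnt2
  have hcomb : ∀ p : Fin n × Fin n, p.1 < p.2 →
      g p + g (Prod.swap p) = (ω p.1 * ω p.2) * (cnt2 t 𝒩 N p : ℤ) := by
    intro p hp
    have hswF : ω (Prod.swap p).1 * ω (Prod.swap p).2 = ω p.1 * ω p.2 := mul_comm _ _
    rw [hg]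
    simp only [hswF]
    rw [← mul_add]
    congr 1
    rw [← Nat.cast_add]
    congr 1
    rw [cnt2, ← Finset.card_union_of_disjoint, ← Finset.filter_or]
    · congr 1
      apply Finset.filter_congr
      intro i _
      simp only [hcond, Prod.fst_swap, Prod.snd_swap, mem_sep]
      unfold Dside
      tauto
    · rw [Finset.disjoint_filter]
      intro i _ h1 h2
      rw [hcond] at h1 h2
      simp only [Prod.fst_swap, Prod.snd_swap] at h2
      exact h1.2.2.2 h2.2.2.1
  have : ∑ p ∈ U2.filter (fun p => p.1 < p.2), (g p + g (Prod.swap p))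
      = ∑ p ∈ U2.filter (fun p => p.1 < p.2), (ω p.1 * ω p.2) * (cnt2 t 𝒩 N p : ℤ) := by
    apply Finset.sum_congr rfl
    intro p hp
    rw [Finset.mem_filter] at hp
    exact hcomb p hp.2
  rw [this]
  -- split by whether the pair is inside V(N)
  rw [← Finset.sum_filter_add_sum_filter_not (U2.filter (fun p => p.1 < p.2))
    (fun p => p.1 ∈ nestVtx t N ∧ p.2 ∈ nestVtx t N)
    (fun p => (ω p.1 * ω p.2) * (cnt2 t 𝒩 N p : ℤ))]
  congr 1
  · -- pairs inside V(N): each counted exactly once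
    have hone : ∀ p : Fin n × Fin n,
        p ∈ (U2.filter (fun p => p.1 < p.2)).filter
          (fun p => p.1 ∈ nestVtx t N ∧ p.2 ∈ nestVtx t N) →
        (cnt2 t 𝒩 N p : ℤ) = 1 := by
      intro p hp
      simp only [Finset.mem_filter] at hp
      obtain ⟨⟨-, hlt⟩, h1, h2⟩ := hp
      have hne : p.1 ≠ p.2 := ne_of_lt hlt
      have : N.filter (fun i => p.1 ∈ nestVtx t (minNest 𝒩 i) ∧
          p.2 ∈ nestVtx t (minNest 𝒩 i) ∧ i ∈ sep t p.1 p.2) = Tset t 𝒩 p.1 p.2 := by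
        rw [Tset]
        apply Finset.ext
        intro i
        simp only [Finset.mem_filter, Finset.mem_univ, true_and]
        constructor
        · rintro ⟨-, h⟩; exact h
        · rintro ⟨hv1, hv2, hs⟩
          refine ⟨?_, hv1, hv2, hs⟩
          by_contra hiN
          exact mem_sep_of_ne t hs (hNa i hiN p.1 h1 p.2 h2)
      rw [cnt2, this, Tset_card t hn hmax hne]
      simp
    rw [Finset.sum_congr rfl (fun p hp => by rw [hone p hp, mul_one])]
    rw [ccZ]
    apply Finset.sum_congr ?_ (fun _ _ => rfl)
    ext p
    simp only [Finset.mem_filter, Finset.mem_product, hU2, Finset.mem_univ, true_and]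
    tauto
  · apply Finset.sum_congr ?_ (fun _ _ => rfl)
    rw [Finset.filter_filter]

end Counting
section Consequences

variable {n : ℕ} (t : PTree n) {𝒩 : Finset (Finset (Fin (n - 1)))} (ω : Fin n → ℤ)

lemma nestVtx_univ (hn : 2 ≤ n) : nestVtx t (Finset.univ : Finset (Fin (n-1))) = Finset.univ := by
  apply Finset.eq_univ_of_forall
  intro v
  rcases Nat.eq_zero_or_pos v.val with h0 | h0
  · have h1 : (0 : ℕ) < n - 1 := by omega
    have hp : t.parent (childV (⟨0, h1⟩ : Fin (n-1))) = v := by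
      have hc : (childV (⟨0, h1⟩ : Fin (n-1)) : Fin n).val = 1 := rfl
      have := t.parent_lt (childV (⟨0, h1⟩ : Fin (n-1))) (by rw [hc]; omega)
      apply Fin.ext
      rw [h0]
      omega
    exact (mem_nestVtx t).2 ⟨⟨0, h1⟩, Finset.mem_univ _, Or.inr hp.symm⟩
  · have hv0 : v.val ≠ 0 := by omega
    exact (mem_nestVtx t).2 ⟨edgeOf v hv0, Finset.mem_univ _, Or.inl (childV_edgeOf hv0).symm⟩

lemma isNest_conn {N : Finset (Fin (n-1))} (hN : IsNest t N) :
    ∀ e ∈ N, ∀ f ∈ N, EdgeConn t N e f := hN.2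

lemma nest_hNa {N : Finset (Fin (n-1))} (hN : IsNest t N) :
    ∀ e, e ∉ N → ∀ v ∈ nestVtx t N, ∀ w ∈ nestVtx t N, (Dside t e v ↔ Dside t e w) :=
  fun e he v hv w hw => Dside_const t (isNest_conn t hN) he hv hw

lemma univ_hNa :
    ∀ e, e ∉ (Finset.univ : Finset (Fin (n-1))) →
      ∀ v ∈ nestVtx t Finset.univ, ∀ w ∈ nestVtx t Finset.univ,
        (Dside t e v ↔ Dside t e w) :=
  fun e he => absurd (Finset.mem_univ e) he

/-- if every minimal nest of an edge of `N` is inside `N`, the sum is exactly `ccZ` -/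
lemma sum_alphabeta_eq (hn : 2 ≤ n) (hmax : IsMaxNesting t 𝒩) {N : Finset (Fin (n-1))}
    (hNa : ∀ e, e ∉ N → ∀ v ∈ nestVtx t N, ∀ w ∈ nestVtx t N, (Dside t e v ↔ Dside t e w))
    (hmin : ∀ i ∈ N, minNest 𝒩 i ⊆ N) :
    ∑ i ∈ N, alphaN t 𝒩 ω i * betaN t 𝒩 ω i = ccZ ω (nestVtx t N) := by
  rw [sum_alphabeta t ω hn hmax N hNa]
  have : ∀ p ∈ (Finset.univ ×ˢ Finset.univ).filter
      (fun p : Fin n × Fin n => p.1 < p.2 ∧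
        ¬(p.1 ∈ nestVtx t N ∧ p.2 ∈ nestVtx t N)),
      (ω p.1 * ω p.2) * (cnt2 t 𝒩 N p : ℤ) = 0 := by
    intro p hp
    rw [Finset.mem_filter] at hp
    have : cnt2 t 𝒩 N p = 0 := by
      rw [cnt2, Finset.card_eq_zero]
      apply Finset.filter_false_of_mem
      intro i hi
      rintro ⟨h1, h2, -⟩
      exact hp.2.2 ⟨nestVtx_mono t (hmin i hi) h1, nestVtx_mono t (hmin i hi) h2⟩
    rw [this]
    simp
  rw [Finset.sum_congr rfl this]
  simp

/-- over the full edge set, the sum equals the total pair count -/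
lemma sum_alphabeta_univ (hn : 2 ≤ n) (hmax : IsMaxNesting t 𝒩) :
    ∑ i : Fin (n-1), alphaN t 𝒩 ω i * betaN t 𝒩 ω i
      = ∑ p ∈ Finset.univ.filter (fun p : Fin n × Fin n => p.1 < p.2), ω p.1 * ω p.2 := by
  rw [sum_alphabeta_eq t ω hn hmax (univ_hNa t) (fun i _ => Finset.subset_univ _)]
  rw [ccZ, nestVtx_univ t hn, Finset.univ_product_univ]

lemma remainder_nonneg (hω : ∀ j, 0 < ω j) {N : Finset (Fin (n-1))} :
    0 ≤ ∑ p ∈ (Finset.univ ×ˢ Finset.univ).filter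
        (fun p : Fin n × Fin n => p.1 < p.2 ∧
          ¬(p.1 ∈ nestVtx t N ∧ p.2 ∈ nestVtx t N)),
        (ω p.1 * ω p.2) * (cnt2 t 𝒩 N p : ℤ) := by
  apply Finset.sum_nonneg
  intro p _
  apply mul_nonneg (mul_nonneg (le_of_lt (hω p.1)) (le_of_lt (hω p.2)))
  exact Int.natCast_nonneg _

lemma sum_alphabeta_ge (hω : ∀ j, 0 < ω j) (hn : 2 ≤ n) (hmax : IsMaxNesting t 𝒩) {N : Finset (Fin (n-1))}
    (hN : IsNest t N) :
    ccZ ω (nestVtx t N) ≤ ∑ i ∈ N, alphaN t 𝒩 ω i * betaN t 𝒩 ω i := by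
  rw [sum_alphabeta t ω hn hmax N (nest_hNa t hN)]
  have := remainder_nonneg t ω hω (𝒩 := 𝒩) (N := N)
  linarith

/-- equality characterization -/
lemma sum_alphabeta_eq_iff (hω : ∀ j, 0 < ω j) (hn : 2 ≤ n) (hmax : IsMaxNesting t 𝒩) {N : Finset (Fin (n-1))}
    (hN : IsNest t N) :
    (∑ i ∈ N, alphaN t 𝒩 ω i * betaN t 𝒩 ω i = ccZ ω (nestVtx t N)) ↔ N ∈ 𝒩 := by
  classical
  constructor
  · intro heq
    -- the remainder vanishes
    rw [sum_alphabeta t ω hn hmax N (nest_hNa t hN)] at heq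
    have hR : ∑ p ∈ (Finset.univ ×ˢ Finset.univ).filter
        (fun p : Fin n × Fin n => p.1 < p.2 ∧
          ¬(p.1 ∈ nestVtx t N ∧ p.2 ∈ nestVtx t N)),
        (ω p.1 * ω p.2) * (cnt2 t 𝒩 N p : ℤ) = 0 := by linarith
    have hterm := (Finset.sum_eq_zero_iff_of_nonneg
      (fun p _ => mul_nonneg (mul_nonneg (le_of_lt (hω p.1)) (le_of_lt (hω p.2)))
        (Int.natCast_nonneg _))).1 hR
    -- stage 1: every minimal nest is inside N
    have hmin : ∀ i ∈ N, minNest 𝒩 i ⊆ N := by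
      intro i hi
      by_contra hsub
      obtain ⟨e, heM, heN⟩ := Finset.not_subset.1 hsub
      -- find a vertex of Vmin i outside V(N)
      have hvex : ∃ v ∈ nestVtx t (minNest 𝒩 i), v ∉ nestVtx t N := by
        by_contra hall
        push_neg at hall
        apply heN
        apply mem_of_endpoints t (isNest_conn t hN)
        · exact hall _ (childV_mem_nestVtx t heM)
        · exact hall _ (parent_childV_mem_nestVtx t heM)
      obtain ⟨v, hvM, hvN⟩ := hvex
      -- the other endpoint of i on the opposite side of v
      have hciM : childV i ∈ nestVtx t (minNest 𝒩 i) :=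
        childV_mem_nestVtx t (mem_minNest t hmax.1 i)
      have hpiM : t.parent (childV i) ∈ nestVtx t (minNest 𝒩 i) :=
        parent_childV_mem_nestVtx t (mem_minNest t hmax.1 i)
      by_cases hDv : Dside t i v
      · -- pair (v, parent (childV i)) separated by i
        set u := t.parent (childV i) with hu
        have hDu : ¬ Dside t i u := not_Dside_parent t i
        have hvu : v ≠ u := fun h => hDu (h ▸ hDv)
        have hsepm : i ∈ sep t v u := by
          rw [mem_sep]; exact Or.inl ⟨hDv, hDu⟩
        rcases lt_or_gt_of_ne hvu with hlt | hgt
        · have hp : (v, u) ∈ (Finset.univ ×ˢ Finset.univ).filter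
              (fun p : Fin n × Fin n => p.1 < p.2 ∧
                ¬(p.1 ∈ nestVtx t N ∧ p.2 ∈ nestVtx t N)) := by
            rw [Finset.mem_filter]
            exact ⟨Finset.mem_product.2 ⟨Finset.mem_univ _, Finset.mem_univ _⟩, hlt,
              fun h => hvN h.1⟩
          have hz := hterm _ hp
          simp only [] at hz
          have hcnt : i ∈ N.filter (fun j => v ∈ nestVtx t (minNest 𝒩 j) ∧
              u ∈ nestVtx t (minNest 𝒩 j) ∧ j ∈ sep t v u) :=
            Finset.mem_filter.2 ⟨hi, hvM, hpiM, hsepm⟩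
          have hpos : 0 < cnt2 t 𝒩 N (v, u) := Finset.card_pos.2 ⟨i, hcnt⟩
          have hωpos : 0 < ω v * ω u := mul_pos (hω v) (hω u)
          have hpos2 : 0 < (ω (v, u).1 * ω (v, u).2) * (cnt2 t 𝒩 N (v, u) : ℤ) := by
            simp only []
            positivity
          exact ne_of_gt hpos2 hz
        · have hp : (u, v) ∈ (Finset.univ ×ˢ Finset.univ).filter
              (fun p : Fin n × Fin n => p.1 < p.2 ∧
                ¬(p.1 ∈ nestVtx t N ∧ p.2 ∈ nestVtx t N)) := by
            rw [Finset.mem_filter]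
            exact ⟨Finset.mem_product.2 ⟨Finset.mem_univ _, Finset.mem_univ _⟩, hgt,
              fun h => hvN h.2⟩
          have hz := hterm _ hp
          have hsepm' : i ∈ sep t u v := by rw [sep_symm]; exact hsepm
          have hcnt : i ∈ N.filter (fun j => u ∈ nestVtx t (minNest 𝒩 j) ∧
              v ∈ nestVtx t (minNest 𝒩 j) ∧ j ∈ sep t u v) :=
            Finset.mem_filter.2 ⟨hi, hpiM, hvM, hsepm'⟩
          have hpos : 0 < cnt2 t 𝒩 N (u, v) := Finset.card_pos.2 ⟨i, hcnt⟩
          have hpos2 : 0 < (ω (u, v).1 * ω (u, v).2) * (cnt2 t 𝒩 N (u, v) : ℤ) := by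
            have hωpos : 0 < ω u * ω v := mul_pos (hω u) (hω v)
            simp only []
            positivity
          exact ne_of_gt hpos2 hz
      · -- pair (v, childV i) separated by i
        set u := (childV i : Fin n) with hu
        have hDu : Dside t i u := Dside_child t i
        have hvu : v ≠ u := fun h => hDv (h ▸ hDu)
        have hsepm : i ∈ sep t v u := by
          rw [mem_sep]; exact Or.inr ⟨hDv, hDu⟩
        rcases lt_or_gt_of_ne hvu with hlt | hgt
        · have hp : (v, u) ∈ (Finset.univ ×ˢ Finset.univ).filter
              (fun p : Fin n × Fin n => p.1 < p.2 ∧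
                ¬(p.1 ∈ nestVtx t N ∧ p.2 ∈ nestVtx t N)) := by
            rw [Finset.mem_filter]
            exact ⟨Finset.mem_product.2 ⟨Finset.mem_univ _, Finset.mem_univ _⟩, hlt,
              fun h => hvN h.1⟩
          have hz := hterm _ hp
          have hcnt : i ∈ N.filter (fun j => v ∈ nestVtx t (minNest 𝒩 j) ∧
              u ∈ nestVtx t (minNest 𝒩 j) ∧ j ∈ sep t v u) :=
            Finset.mem_filter.2 ⟨hi, hvM, hciM, hsepm⟩
          have hpos : 0 < cnt2 t 𝒩 N (v, u) := Finset.card_pos.2 ⟨i, hcnt⟩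
          have hpos2 : 0 < (ω (v, u).1 * ω (v, u).2) * (cnt2 t 𝒩 N (v, u) : ℤ) := by
            have hωpos : 0 < ω v * ω u := mul_pos (hω v) (hω u)
            simp only []
            positivity
          exact ne_of_gt hpos2 hz
        · have hp : (u, v) ∈ (Finset.univ ×ˢ Finset.univ).filter
              (fun p : Fin n × Fin n => p.1 < p.2 ∧
                ¬(p.1 ∈ nestVtx t N ∧ p.2 ∈ nestVtx t N)) := by
            rw [Finset.mem_filter]
            exact ⟨Finset.mem_product.2 ⟨Finset.mem_univ _, Finset.mem_univ _⟩, hgt,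
              fun h => hvN h.2⟩
          have hz := hterm _ hp
          have hsepm' : i ∈ sep t u v := by rw [sep_symm]; exact hsepm
          have hcnt : i ∈ N.filter (fun j => u ∈ nestVtx t (minNest 𝒩 j) ∧
              v ∈ nestVtx t (minNest 𝒩 j) ∧ j ∈ sep t u v) :=
            Finset.mem_filter.2 ⟨hi, hciM, hvM, hsepm'⟩
          have hpos : 0 < cnt2 t 𝒩 N (u, v) := Finset.card_pos.2 ⟨i, hcnt⟩
          have hpos2 : 0 < (ω (u, v).1 * ω (u, v).2) * (cnt2 t 𝒩 N (u, v) : ℤ) := by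
            have hωpos : 0 < ω u * ω v := mul_pos (hω u) (hω v)
            simp only []
            positivity
          exact ne_of_gt hpos2 hz
    -- stage 2: N is the minimal nest of its maximal element
    have hNne : N.Nonempty := by
      rcases hN.1 with h | h
      · exact h
      · rw [h]; exact ⟨⟨0, by omega⟩, Finset.mem_univ _⟩
    obtain ⟨i, hiN, himax⟩ := exists_max_minNest (𝒩 := 𝒩) hNne
    have h1 : ∀ j ∈ N, j ∈ minNest 𝒩 i :=
      conn_subset_maxMinNest t hmax.1 (isNest_conn t hN) hiN himax
    have : N = minNest 𝒩 i := by
      apply Finset.Subset.antisymm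
      · intro j hj; exact h1 j hj
      · exact hmin i hiN
    rw [this]
    exact minNest_mem t hmax.1 i
  · intro hmem
    exact sum_alphabeta_eq t ω hn hmax (nest_hNa t hN)
      (fun i hi => minNest_min t hmax.1 hmem hi)

end Consequences
section Supermod

variable {n : ℕ} (t : PTree n) (ω : Fin n → ℤ)

lemma ccZ_eq_sum_ite (A : Finset (Fin n)) :
    ccZ ω A = ∑ p ∈ (Finset.univ ×ˢ Finset.univ).filter (fun p : Fin n × Fin n => p.1 < p.2),
      if p.1 ∈ A ∧ p.2 ∈ A then ω p.1 * ω p.2 else 0 := by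
  rw [ccZ, ← Finset.sum_filter]
  apply Finset.sum_congr ?_ (fun _ _ => rfl)
  rw [Finset.filter_filter]
  ext p
  simp only [Finset.mem_filter, Finset.mem_product, Finset.mem_univ, true_and]
  tauto

lemma ccZ_empty : ccZ ω (∅ : Finset (Fin n)) = 0 := by
  rw [ccZ]
  simp

lemma ccZ_strict_supermod (hω : ∀ j, 0 < ω j) (A B C : Finset (Fin n))
    (hC : ∀ u v : Fin n, u ∈ A ∩ B → v ∈ A ∩ B → u ≠ v → u ∈ C ∧ v ∈ C)
    {k l : Fin n} (hk : k ∈ A) (hknB : k ∉ B) (hl : l ∈ B) (hlnA : l ∉ A) :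
    ccZ ω A + ccZ ω B + ω k * ω l ≤ ccZ ω (A ∪ B) + ccZ ω C := by
  classical
  set P := (Finset.univ ×ˢ Finset.univ).filter (fun p : Fin n × Fin n => p.1 < p.2) with hP
  have hkl : k ≠ l := fun h => hknB (h ▸ hl)
  set p0 : Fin n × Fin n := if k < l then (k, l) else (l, k) with hp0
  have hp0P : p0 ∈ P := by
    rw [hP, Finset.mem_filter]
    refine ⟨Finset.mem_product.2 ⟨Finset.mem_univ _, Finset.mem_univ _⟩, ?_⟩
    rcases lt_or_gt_of_ne hkl with h | h
    · rw [hp0, if_pos h]; exact h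
    · rw [hp0, if_neg (by omega)]; exact h
  have hstep : ∀ p ∈ P,
      (if p.1 ∈ A ∧ p.2 ∈ A then ω p.1 * ω p.2 else 0)
        + (if p.1 ∈ B ∧ p.2 ∈ B then ω p.1 * ω p.2 else 0)
        + (if p = p0 then ω p.1 * ω p.2 else 0)
      ≤ (if p.1 ∈ A ∪ B ∧ p.2 ∈ A ∪ B then ω p.1 * ω p.2 else 0)
        + (if p.1 ∈ C ∧ p.2 ∈ C then ω p.1 * ω p.2 else 0) := by
    intro p hp
    rw [hP, Finset.mem_filter] at hp
    have hne : p.1 ≠ p.2 := ne_of_lt hp.2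
    have hw : (0:ℤ) ≤ ω p.1 * ω p.2 := le_of_lt (mul_pos (hω p.1) (hω p.2))
    by_cases h0 : p = p0
    · -- at the special pair, A and B indicators both vanish
      have h1 : ¬ (p.1 ∈ A ∧ p.2 ∈ A) := by
        rw [h0, hp0]
        split_ifs with h
        · rintro ⟨-, hc⟩; exact hlnA hc
        · rintro ⟨hc, -⟩; exact hlnA hc
      have h2 : ¬ (p.1 ∈ B ∧ p.2 ∈ B) := by
        rw [h0, hp0]
        split_ifs with h
        · rintro ⟨hc, -⟩; exact hknB hc
        · rintro ⟨-, hc⟩; exact hknB hc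
      have h3 : p.1 ∈ A ∪ B ∧ p.2 ∈ A ∪ B := by
        rw [h0, hp0]
        split_ifs with h
        · exact ⟨Finset.mem_union_left _ hk, Finset.mem_union_right _ hl⟩
        · exact ⟨Finset.mem_union_right _ hl, Finset.mem_union_left _ hk⟩
      rw [if_neg h1, if_neg h2, if_pos h0, if_pos h3]
      have : (0:ℤ) ≤ if p.1 ∈ C ∧ p.2 ∈ C then ω p.1 * ω p.2 else 0 := by
        split_ifs
        · exact hw
        · exact le_refl 0
      rw [h0] at this ⊢
      linarith
    · rw [if_neg h0, add_zero]
      by_cases hA : p.1 ∈ A ∧ p.2 ∈ A <;> by_cases hB : p.1 ∈ B ∧ p.2 ∈ B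
      · -- both: the pair is in A ∩ B hence in C
        have hCp := hC p.1 p.2 (Finset.mem_inter.2 ⟨hA.1, hB.1⟩)
          (Finset.mem_inter.2 ⟨hA.2, hB.2⟩) hne
        rw [if_pos hA, if_pos hB,
          if_pos ⟨Finset.mem_union_left _ hA.1, Finset.mem_union_left _ hA.2⟩,
          if_pos ⟨hCp.1, hCp.2⟩]
      · rw [if_pos hA, if_neg hB, add_zero,
          if_pos ⟨Finset.mem_union_left _ hA.1, Finset.mem_union_left _ hA.2⟩]
        have : (0:ℤ) ≤ if p.1 ∈ C ∧ p.2 ∈ C then ω p.1 * ω p.2 else 0 := by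
          split_ifs
          · exact hw
          · exact le_refl 0
        linarith
      · rw [if_neg hA, if_pos hB, zero_add,
          if_pos ⟨Finset.mem_union_right _ hB.1, Finset.mem_union_right _ hB.2⟩]
        have : (0:ℤ) ≤ if p.1 ∈ C ∧ p.2 ∈ C then ω p.1 * ω p.2 else 0 := by
          split_ifs
          · exact hw
          · exact le_refl 0
        linarith
      · rw [if_neg hA, if_neg hB]
        have h1 : (0:ℤ) ≤ if p.1 ∈ C ∧ p.2 ∈ C then ω p.1 * ω p.2 else 0 := by
          split_ifs
          · exact hw
          · exact le_refl 0
        have h2 : (0:ℤ) ≤ if p.1 ∈ A ∪ B ∧ p.2 ∈ A ∪ B then ω p.1 * ω p.2 else 0 := by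
          split_ifs
          · exact hw
          · exact le_refl 0
        linarith
  have hsum := Finset.sum_le_sum hstep
  rw [Finset.sum_add_distrib, Finset.sum_add_distrib, Finset.sum_add_distrib] at hsum
  rw [← ccZ_eq_sum_ite ω A, ← ccZ_eq_sum_ite ω B, ← ccZ_eq_sum_ite ω (A ∪ B),
    ← ccZ_eq_sum_ite ω C] at hsum
  have hsingle : ∑ p ∈ P, (if p = p0 then ω p.1 * ω p.2 else 0) = ω k * ω l := by
    rw [Finset.sum_ite_eq' P p0 (fun p => ω p.1 * ω p.2), if_pos hp0P]
    rw [hp0]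
    split_ifs
    · rfl
    · exact mul_comm _ _
  rw [hsingle] at hsum
  exact hsum

/-- vertex sets of nonempty edge sets have two distinct elements -/
lemma nestVtx_two {N : Finset (Fin (n-1))} (hN : N.Nonempty) :
    ∃ u v : Fin n, u ≠ v ∧ u ∈ nestVtx t N ∧ v ∈ nestVtx t N := by
  obtain ⟨e, he⟩ := hN
  exact ⟨childV e, t.parent (childV e), fun h => parent_childV_ne t e h.symm,
    childV_mem_nestVtx t he, parent_childV_mem_nestVtx t he⟩

/-- two distinct common vertices of two nests lie in the vertex set of the intersection -/
lemma common_pair_mem_inter {N M : Finset (Fin (n-1))} (hN : IsNest t N) (hM : IsNest t M)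
    {u v : Fin n} (hu : u ∈ nestVtx t N ∩ nestVtx t M) (hv : v ∈ nestVtx t N ∩ nestVtx t M)
    (huv : u ≠ v) : u ∈ nestVtx t (N ∩ M) ∧ v ∈ nestVtx t (N ∩ M) := by
  rw [Finset.mem_inter] at hu hv
  have hsub : sep t u v ⊆ N ∩ M := by
    intro e he
    rw [Finset.mem_inter]
    exact ⟨sep_subset_of_conn t (isNest_conn t hN) hu.1 hv.1 he,
      sep_subset_of_conn t (isNest_conn t hM) hu.2 hv.2 he⟩
  constructor
  · exact nestVtx_mono t hsub (mem_nestVtx_sep t huv)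
  · refine nestVtx_mono t hsub ?_
    rw [sep_symm]
    exact mem_nestVtx_sep t (Ne.symm huv)

/-- common vertex sets of disjoint nests are subsingletons -/
lemma disjoint_nest_common_subsingleton {N M : Finset (Fin (n-1))}
    (hN : IsNest t N) (hM : IsNest t M) (hd : Disjoint N M)
    {u v : Fin n} (hu : u ∈ nestVtx t N ∩ nestVtx t M)
    (hv : v ∈ nestVtx t N ∩ nestVtx t M) : u = v := by
  by_contra huv
  rw [Finset.mem_inter] at hu hv
  have hsubN : sep t u v ⊆ N := sep_subset_of_conn t (isNest_conn t hN) hu.1 hv.1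
  have hsubM : sep t u v ⊆ M := sep_subset_of_conn t (isNest_conn t hM) hu.2 hv.2
  obtain ⟨e, he⟩ := sep_nonempty t (show u ≠ v from huv)
  exact Finset.disjoint_left.1 hd (hsubN he) (hsubM he)

/-- an edge set whose vertices lie in the vertex set of a nest is contained in the nest -/
lemma subset_of_nestVtx_subset {N M : Finset (Fin (n-1))} (hM : IsNest t M)
    (h : nestVtx t N ⊆ nestVtx t M) : N ⊆ M := by
  intro e he
  exact mem_of_endpoints t (isNest_conn t hM)
    (h (childV_mem_nestVtx t he)) (h (parent_childV_mem_nestVtx t he))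

/-- the union of two nests sharing or linked by an edge is a nest -/
lemma isNest_union {N M : Finset (Fin (n-1))} (hN : IsNest t N) (hM : IsNest t M)
    {e f : Fin (n-1)} (he : e ∈ N) (hf : f ∈ M) (hadj : e = f ∨ edgeAdj t e f) :
    IsNest t (N ∪ M) := by
  constructor
  · left; exact ⟨e, Finset.mem_union_left _ he⟩
  · have hbridge : EdgeConn t (N ∪ M) e f := by
      rcases hadj with rfl | hadj
      · exact Relation.ReflTransGen.refl
      · exact Relation.ReflTransGen.single
          ⟨Finset.mem_union_left _ he, Finset.mem_union_right _ hf, hadj⟩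
    intro a ha b hb
    rw [Finset.mem_union] at ha hb
    have connN : ∀ c ∈ N, EdgeConn t (N ∪ M) c e := fun c hc =>
      EdgeConn.mono t Finset.subset_union_left (isNest_conn t hN c hc e he)
    have connM : ∀ c ∈ M, EdgeConn t (N ∪ M) f c := fun c hc =>
      EdgeConn.mono t Finset.subset_union_right (isNest_conn t hM f hf c hc)
    rcases ha with ha | ha <;> rcases hb with hb | hb
    · exact EdgeConn.mono t Finset.subset_union_left (isNest_conn t hN a ha b hb)
    · exact ((connN a ha).trans hbridge).trans (connM b hb)
    · exact EdgeConn.symm t (((connN b hb).trans hbridge).trans (connM a ha))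
    · exact EdgeConn.mono t Finset.subset_union_right (isNest_conn t hM a ha b hb)

/-- the intersection of two non-disjoint nests is a nest -/
lemma isNest_inter {N M : Finset (Fin (n-1))} (hN : IsNest t N) (hM : IsNest t M)
    (hd : ¬ Disjoint N M) : IsNest t (N ∩ M) := by
  obtain ⟨e0, he0N, he0M⟩ := Finset.not_disjoint_iff.1 hd
  constructor
  · left; exact ⟨e0, Finset.mem_inter.2 ⟨he0N, he0M⟩⟩
  · intro a ha b hb
    rw [Finset.mem_inter] at ha hb
    apply conn_of_sep_subset t (Finset.mem_inter.2 ha) (Finset.mem_inter.2 hb)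
    intro g hg
    rw [Finset.mem_inter]
    exact ⟨sep_subset_of_conn t (isNest_conn t hN)
        (childV_mem_nestVtx t ha.1) (childV_mem_nestVtx t hb.1) hg,
      sep_subset_of_conn t (isNest_conn t hM)
        (childV_mem_nestVtx t ha.2) (childV_mem_nestVtx t hb.2) hg⟩

lemma isNest_univ : IsNest t (Finset.univ : Finset (Fin (n-1))) := by
  constructor
  · right; rfl
  · intro a _ b _
    exact conn_of_sep_subset t (Finset.mem_univ _) (Finset.mem_univ _) (Finset.subset_univ _)

end Supermod
section QSetSection

variable {n : ℕ}

/-- the constant of the defining hyperplane -/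
def cB {n : ℕ} (ω : Fin n → ℤ) : ℤ :=
  ∑ p ∈ Finset.univ.filter (fun p : Fin n × Fin n => p.1 < p.2), ω p.1 * ω p.2

/-- the H-description of the Loday realization -/
def QSet {n : ℕ} (t : PTree n) (ω : Fin n → ℤ) : Set (Vec (n - 1)) :=
  {x | (∑ i, x i) = ((cB ω : ℤ) : ℝ) ∧
    ∀ N : Finset (Fin (n - 1)), IsNest t N → N ≠ Finset.univ →
      ((ccZ ω (nestVtx t N) : ℤ) : ℝ) ≤ ∑ i ∈ N, x i}

variable (t : PTree n) (ω : Fin n → ℤ)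

lemma ccZ_nestVtx_univ (hn : 2 ≤ n) : ccZ ω (nestVtx t (Finset.univ : Finset (Fin (n-1)))) = cB ω := by
  rw [ccZ, nestVtx_univ t hn, Finset.univ_product_univ, cB]

lemma QX {x : Vec (n-1)} (hn : 2 ≤ n) (hx : x ∈ QSet t ω) {N : Finset (Fin (n-1))}
    (hN : IsNest t N) : ((ccZ ω (nestVtx t N) : ℤ) : ℝ) ≤ ∑ i ∈ N, x i := by
  by_cases hu : N = Finset.univ
  · subst hu
    rw [ccZ_nestVtx_univ t ω hn]
    exact le_of_eq hx.1.symm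
  · exact hx.2 N hN hu

open Classical in
/-- the nests at which `x` is tight, together with the trivial nest -/
noncomputable def tightFam {n : ℕ} (t : PTree n) (ω : Fin n → ℤ) (x : Vec (n-1)) :
    Finset (Finset (Fin (n - 1))) :=
  insert Finset.univ ((Finset.univ : Finset (Finset (Fin (n-1)))).filter
    (fun N => IsNest t N ∧ N ≠ Finset.univ ∧
      (∑ i ∈ N, x i) = ((ccZ ω (nestVtx t N) : ℤ) : ℝ)))

lemma mem_tightFam {x : Vec (n-1)} {N : Finset (Fin (n-1))} :
    N ∈ tightFam t ω x ↔ (N = Finset.univ ∨ (IsNest t N ∧ N ≠ Finset.univ ∧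
      (∑ i ∈ N, x i) = ((ccZ ω (nestVtx t N) : ℤ) : ℝ))) := by
  classical
  rw [tightFam]
  simp only [Finset.mem_insert, Finset.mem_filter, Finset.mem_univ, true_and]

lemma tightFam_isNest {x : Vec (n-1)} {N : Finset (Fin (n-1))} (h : N ∈ tightFam t ω x) :
    IsNest t N := by
  rcases (mem_tightFam t ω).1 h with h | h
  · rw [h]; exact isNest_univ t
  · exact h.1

lemma tightFam_sum (hn : 2 ≤ n) {x : Vec (n-1)} (hx : x ∈ QSet t ω)
    {N : Finset (Fin (n-1))} (h : N ∈ tightFam t ω x) :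
    ∑ i ∈ N, x i = ((ccZ ω (nestVtx t N) : ℤ) : ℝ) := by
  rcases (mem_tightFam t ω).1 h with h | h
  · subst h
    rw [ccZ_nestVtx_univ t ω hn]
    exact hx.1
  · exact h.2.2

/-- the family of tight nests of a point of `QSet` is a nesting -/
lemma tight_isNesting (hn : 2 ≤ n) (hω : ∀ j, 0 < ω j) {x : Vec (n-1)}
    (hx : x ∈ QSet t ω) : IsNesting t (tightFam t ω x) := by
  classical
  refine ⟨fun N hN => tightFam_isNest t ω hN, (mem_tightFam t ω).2 (Or.inl rfl), ?_⟩
  intro N hNmem M hMmem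
  have hN : IsNest t N := tightFam_isNest t ω hNmem
  have hM : IsNest t M := tightFam_isNest t ω hMmem
  by_cases hNM : N ⊆ M
  · exact Or.inl hNM
  by_cases hMN : M ⊆ N
  · exact Or.inr (Or.inl hMN)
  right; right
  -- both are proper tight nests (`univ` would be comparable)
  have hNu : N ≠ Finset.univ := fun h => hMN (h ▸ Finset.subset_univ M)
  have hMu : M ≠ Finset.univ := fun h => hNM (h ▸ Finset.subset_univ N)
  have hNt : ∑ i ∈ N, x i = ((ccZ ω (nestVtx t N) : ℤ) : ℝ) := tightFam_sum t ω hn hx hNmem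
  have hMt : ∑ i ∈ M, x i = ((ccZ ω (nestVtx t M) : ℤ) : ℝ) := tightFam_sum t ω hn hx hMmem
  -- vertex-set witnesses
  have hkex : ∃ k, k ∈ nestVtx t N ∧ k ∉ nestVtx t M := by
    by_contra hcon
    push_neg at hcon
    exact hNM (subset_of_nestVtx_subset t hM (fun v hv => hcon v hv))
  have hlex : ∃ l, l ∈ nestVtx t M ∧ l ∉ nestVtx t N := by
    by_contra hcon
    push_neg at hcon
    exact hMN (subset_of_nestVtx_subset t hN (fun v hv => hcon v hv))
  obtain ⟨k, hkN, hkM⟩ := hkex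
  obtain ⟨l, hlM, hlN⟩ := hlex
  by_cases hdis : Disjoint N M
  · refine ⟨hdis, ?_⟩
    -- no adjacent pair
    intro e heN f hfM hadj
    have hU : IsNest t (N ∪ M) := isNest_union t hN hM heN hfM (Or.inr hadj)
    have hsuper : ccZ ω (nestVtx t N) + ccZ ω (nestVtx t M) + ω k * ω l
        ≤ ccZ ω (nestVtx t N ∪ nestVtx t M) + ccZ ω (∅ : Finset (Fin n)) := by
      apply ccZ_strict_supermod ω hω _ _ _ ?_ hkN hkM hlM hlN
      intro u v hu hv huv
      exact absurd (disjoint_nest_common_subsingleton t hN hM hdis hu hv) huv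
    rw [ccZ_empty, add_zero, ← nestVtx_union] at hsuper
    have hDU := QX t ω hn hx hU
    rw [Finset.sum_union hdis, hNt, hMt] at hDU
    have hcast : ((ccZ ω (nestVtx t (N ∪ M)) : ℤ) : ℝ)
        ≥ ((ccZ ω (nestVtx t N) : ℤ) : ℝ) + ((ccZ ω (nestVtx t M) : ℤ) : ℝ)
          + ((ω k * ω l : ℤ) : ℝ) := by
      have hsuperR := (Int.cast_le (R := ℝ)).2 hsuper
      push_cast
      push_cast at hsuperR
      linarith
    have hωkl : (0:ℝ) < ((ω k * ω l : ℤ) : ℝ) := by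
      have := mul_pos (hω k) (hω l)
      exact_mod_cast this
    linarith
  · -- overlapping: contradiction, this case cannot happen
    exfalso
    have hI : IsNest t (N ∩ M) := isNest_inter t hN hM hdis
    obtain ⟨e0, he0N, he0M⟩ := Finset.not_disjoint_iff.1 hdis
    have hU : IsNest t (N ∪ M) := isNest_union t hN hM he0N he0M (Or.inl rfl)
    have hsuper : ccZ ω (nestVtx t N) + ccZ ω (nestVtx t M) + ω k * ω l
        ≤ ccZ ω (nestVtx t N ∪ nestVtx t M) + ccZ ω (nestVtx t (N ∩ M)) := by
      apply ccZ_strict_supermod ω hω _ _ _ ?_ hkN hkM hlM hlN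
      intro u v hu hv huv
      exact common_pair_mem_inter t hN hM hu hv huv
    rw [← nestVtx_union] at hsuper
    have hDU := QX t ω hn hx hU
    have hDI := QX t ω hn hx hI
    have hsum : ∑ i ∈ (N ∪ M), x i + ∑ i ∈ (N ∩ M), x i = ∑ i ∈ N, x i + ∑ i ∈ M, x i :=
      Finset.sum_union_inter
    have hωkl : (0:ℝ) < ((ω k * ω l : ℤ) : ℝ) := by
      have := mul_pos (hω k) (hω l)
      exact_mod_cast this
    have hcast : ((ccZ ω (nestVtx t (N ∪ M)) : ℤ) : ℝ) + ((ccZ ω (nestVtx t (N ∩ M)) : ℤ) : ℝ)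
        ≥ ((ccZ ω (nestVtx t N) : ℤ) : ℝ) + ((ccZ ω (nestVtx t M) : ℤ) : ℝ)
          + ((ω k * ω l : ℤ) : ℝ) := by
      have hsuperR := (Int.cast_le (R := ℝ)).2 hsuper
      push_cast
      push_cast at hsuperR
      linarith
    rw [hNt, hMt] at hsum
    linarith

end QSetSection
section LinAlg

variable {m : ℕ}

/-- indicator vector of an edge subset -/
def indV {m : ℕ} (N : Finset (Fin m)) : Vec m := fun i => if i ∈ N then 1 else 0

lemma sum_eq_dot_ind (N : Finset (Fin m)) (y : Vec m) :
    ∑ i, indV N i * y i = ∑ i ∈ N, y i := by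
  rw [← Finset.sum_filter_add_sum_filter_not Finset.univ (fun i => i ∈ N)
    (fun i => indV N i * y i)]
  have h1 : ∀ i ∈ Finset.univ.filter (fun i => i ∈ N), indV N i * y i = y i := by
    intro i hi
    rw [Finset.mem_filter] at hi
    rw [indV, if_pos hi.2, one_mul]
  have h2 : ∀ i ∈ Finset.univ.filter (fun i => ¬ i ∈ N), indV N i * y i = 0 := by
    intro i hi
    rw [Finset.mem_filter] at hi
    rw [indV, if_neg hi.2, zero_mul]
  rw [Finset.sum_congr rfl h1, Finset.sum_congr rfl h2, Finset.sum_const_zero, add_zero]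
  apply Finset.sum_congr ?_ (fun _ _ => rfl)
  ext i
  simp

/-- on a proper subspace there is a nonzero orthogonal vector -/
lemma exists_perp (V : Submodule ℝ (Vec m)) (hV : V ≠ ⊤) :
    ∃ d : Vec m, d ≠ 0 ∧ ∀ v ∈ V, (∑ i, v i * d i) = 0 := by
  classical
  set e : EuclideanSpace ℝ (Fin m) ≃ₗ[ℝ] Vec m := WithLp.linearEquiv 2 ℝ (Fin m → ℝ) with he
  set V' : Submodule ℝ (EuclideanSpace ℝ (Fin m)) := V.comap e.toLinearMap with hV'
  have hV'top : V' ≠ ⊤ := by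
    intro hc
    apply hV
    rw [Submodule.eq_top_iff']
    intro x
    have : e.symm x ∈ V' := by rw [hc]; exact Submodule.mem_top
    rw [hV', Submodule.mem_comap] at this
    simpa using this
  have hbot : V'ᗮ ≠ ⊥ := by
    intro hc
    exact hV'top (Submodule.orthogonal_eq_bot_iff.1 hc)
  obtain ⟨d', hd'mem, hd'ne⟩ := Submodule.exists_mem_ne_zero_of_ne_bot hbot
  refine ⟨e d', ?_, ?_⟩
  · intro hc
    apply hd'ne
    have := congrArg e.symm hc
    simpa using this
  · intro v hv
    have hvV' : e.symm v ∈ V' := by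
      rw [hV', Submodule.mem_comap]
      simpa using hv
    have := (Submodule.mem_orthogonal V' d').1 hd'mem (e.symm v) hvV'
    rw [PiLp.inner_apply] at this
    simp only [RCLike.inner_apply, starRingEnd_apply, star_trivial] at this
    rw [← this]
    apply Finset.sum_congr rfl
    intro i _
    rw [mul_comm]; rfl

/-- a spanning family of indicators pins down vectors with equal partial sums -/
lemma eq_of_spanning {F : Finset (Finset (Fin m))}
    (hspan : Submodule.span ℝ (Set.image indV (F : Set (Finset (Fin m)))) = ⊤)
    {x y : Vec m} (h : ∀ N ∈ F, ∑ i ∈ N, x i = ∑ i ∈ N, y i) : x = y := by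
  classical
  set d : Vec m := fun i => x i - y i with hd
  set φ : Vec m →ₗ[ℝ] ℝ := {
    toFun := fun v => ∑ i, v i * d i
    map_add' := by
      intro a b
      simp only [Pi.add_apply, add_mul]
      rw [Finset.sum_add_distrib]
    map_smul' := by
      intro c a
      simp only [Pi.smul_apply, smul_eq_mul, RingHom.id_apply, mul_assoc]
      rw [Finset.mul_sum] } with hφ
  have hker : ∀ N ∈ F, φ (indV N) = 0 := by
    intro N hN
    have : φ (indV N) = ∑ i ∈ N, d i := by
      rw [hφ]
      exact sum_eq_dot_ind N d
    rw [this, hd]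
    simp only [Pi.sub_apply]
    rw [Finset.sum_sub_distrib, h N hN, sub_self]
  have hle : Submodule.span ℝ (Set.image indV (F : Set (Finset (Fin m)))) ≤ LinearMap.ker φ := by
    rw [Submodule.span_le]
    rintro v ⟨N, hN, rfl⟩
    exact hker N hN
  rw [hspan] at hle
  funext j
  have : φ (Pi.single j 1) = 0 := hle Submodule.mem_top
  rw [hφ] at this
  simp only [LinearMap.coe_mk, AddHom.coe_mk] at this
  have hsum : ∑ i, (Pi.single j 1 : Vec m) i * d i = d j := by
    rw [Finset.sum_eq_single j]
    · simp
    · intro b _ hb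
      rw [Pi.single_eq_of_ne hb, zero_mul]
    · intro hb
      exact absurd (Finset.mem_univ j) hb
  rw [hsum] at this
  rw [hd] at this
  simp only [Pi.sub_apply] at this
  linarith

lemma indV_injective : Function.Injective (indV (m := m)) := by
  intro A B h
  ext i
  have := congrFun h i
  rw [indV, indV] at this
  by_cases hA : i ∈ A <;> by_cases hB : i ∈ B
  · exact iff_of_true hA hB
  · rw [if_pos hA, if_neg hB] at this; norm_num at this
  · rw [if_neg hA, if_pos hB] at this; norm_num at this
  · exact iff_of_false hA hB

/-- if the indicators of a family span, the family has at least `m` elements -/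
lemma card_ge_of_spanning {F : Finset (Finset (Fin m))}
    (hspan : Submodule.span ℝ (Set.image indV (F : Set (Finset (Fin m)))) = ⊤) :
    m ≤ F.card := by
  classical
  have h1 : (m : ℕ) = Module.finrank ℝ (Vec m) := by
    rw [Module.finrank_fintype_fun_eq_card, Fintype.card_fin]
  have himg : Set.image indV (F : Set (Finset (Fin m))) = ((F.image indV : Finset (Vec m)) : Set (Vec m)) := by
    simp [Finset.coe_image]
  calc m = Module.finrank ℝ (Vec m) := h1
    _ = Module.finrank ℝ (Submodule.span ℝ (Set.image indV (F : Set (Finset (Fin m))))) := by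
        rw [hspan]; exact (finrank_top ℝ (Vec m)).symm
    _ ≤ (F.image indV).card := by
        rw [himg]
        exact finrank_span_finset_le_card _
    _ ≤ F.card := Finset.card_image_le

end LinAlg
section MainArgument

variable {n : ℕ} (t : PTree n) (ω : Fin n → ℤ)

lemma sum_MPoint_cast (𝒩 : Finset (Finset (Fin (n-1)))) (N : Finset (Fin (n-1))) :
    ∑ i ∈ N, MPoint t 𝒩 ω i = ((∑ i ∈ N, alphaN t 𝒩 ω i * betaN t 𝒩 ω i : ℤ) : ℝ) := by
  push_cast
  apply Finset.sum_congr rfl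
  intro i _
  rfl

lemma MPoint_mem_QSet (hn : 2 ≤ n) (hω : ∀ j, 0 < ω j) {𝒩 : Finset (Finset (Fin (n-1)))}
    (hmax : IsMaxNesting t 𝒩) : MPoint t 𝒩 ω ∈ QSet t ω := by
  constructor
  · have h1 : ∑ i, MPoint t 𝒩 ω i = ∑ i ∈ Finset.univ, MPoint t 𝒩 ω i := rfl
    rw [h1, sum_MPoint_cast, sum_alphabeta_univ t ω hn hmax]
    rfl
  · intro N hN hNu
    rw [sum_MPoint_cast]
    exact_mod_cast sum_alphabeta_ge t ω hω hn hmax hN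

lemma QSet_convex : Convex ℝ (QSet t ω) := by
  intro x hx y hy a b ha hb hab
  constructor
  · have : ∑ i, (a • x + b • y) i = a * ∑ i, x i + b * ∑ i, y i := by
      simp only [Pi.add_apply, Pi.smul_apply, smul_eq_mul]
      rw [Finset.sum_add_distrib, Finset.mul_sum, Finset.mul_sum]
    rw [this, hx.1, hy.1, ← add_mul, hab, one_mul]
  · intro N hN hNu
    have hsum : ∑ i ∈ N, (a • x + b • y) i = a * ∑ i ∈ N, x i + b * ∑ i ∈ N, y i := by
      simp only [Pi.add_apply, Pi.smul_apply, smul_eq_mul]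
      rw [Finset.sum_add_distrib, Finset.mul_sum, Finset.mul_sum]
    rw [hsum]
    have h1 := hx.2 N hN hNu
    have h2 := hy.2 N hN hNu
    calc ((ccZ ω (nestVtx t N) : ℤ) : ℝ)
        = a * ((ccZ ω (nestVtx t N) : ℤ) : ℝ) + b * ((ccZ ω (nestVtx t N) : ℤ) : ℝ) := by
          rw [← add_mul, hab, one_mul]
      _ ≤ a * ∑ i ∈ N, x i + b * ∑ i ∈ N, y i := by
          apply add_le_add
          · exact mul_le_mul_of_nonneg_left h1 ha
          · exact mul_le_mul_of_nonneg_left h2 hb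

lemma Loday_subset_QSet (hn : 2 ≤ n) (hω : ∀ j, 0 < ω j) : Loday t ω ⊆ QSet t ω := by
  rw [Loday]
  apply convexHull_min ?_ (QSet_convex t ω)
  rintro x ⟨𝒩, hmax, rfl⟩
  exact MPoint_mem_QSet t ω hn hω hmax

open Classical in
/-- the nontrivial nests not tight at `x` -/
noncomputable def badSet {n : ℕ} (t : PTree n) (ω : Fin n → ℤ) (x : Vec (n-1)) :
    Finset (Finset (Fin (n - 1))) :=
  (Finset.univ : Finset (Finset (Fin (n-1)))).filter
    (fun N => IsNest t N ∧ N ≠ Finset.univ ∧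
      (∑ i ∈ N, x i) ≠ ((ccZ ω (nestVtx t N) : ℤ) : ℝ))

lemma mem_badSet {x : Vec (n-1)} {N : Finset (Fin (n-1))} :
    N ∈ badSet t ω x ↔ (IsNest t N ∧ N ≠ Finset.univ ∧
      (∑ i ∈ N, x i) ≠ ((ccZ ω (nestVtx t N) : ℤ) : ℝ)) := by
  classical
  rw [badSet]
  simp only [Finset.mem_filter, Finset.mem_univ, true_and]

lemma singleton_isNest (i : Fin (n-1)) : IsNest t ({i} : Finset (Fin (n-1))) := by
  constructor
  · left; exact ⟨i, Finset.mem_singleton_self i⟩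
  · intro a ha b hb
    rw [Finset.mem_singleton] at ha hb
    subst ha; subst hb
    exact Relation.ReflTransGen.refl

/-- moving from `x` along `d` until a new constraint gets tight -/
lemma move_lemma (hn : 2 ≤ n) (hω : ∀ j, 0 < ω j) {x : Vec (n-1)} (hx : x ∈ QSet t ω)
    {d : Vec (n-1)} (hd0 : ∑ i, d i = 0)
    (hdT : ∀ N ∈ tightFam t ω x, ∑ i ∈ N, d i = 0)
    {i0 : Fin (n-1)} (hi0 : d i0 < 0) :
    ∃ y ∈ QSet t ω, (badSet t ω y).card < (badSet t ω x).card ∧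
      ∃ s : ℝ, 0 < s ∧ y = x + s • d := by
  classical
  set negSet : Finset (Finset (Fin (n-1))) :=
    (Finset.univ : Finset (Finset (Fin (n-1)))).filter
      (fun N => IsNest t N ∧ N ≠ Finset.univ ∧ (∑ i ∈ N, d i) < 0) with hnegSet
  have hmemneg : ∀ N, N ∈ negSet ↔ (IsNest t N ∧ N ≠ Finset.univ ∧ (∑ i ∈ N, d i) < 0) := by
    intro N
    rw [hnegSet]
    simp only [Finset.mem_filter, Finset.mem_univ, true_and]
  have hne : negSet.Nonempty := by
    refine ⟨{i0}, (hmemneg _).2 ⟨singleton_isNest t i0, ?_, by rwa [Finset.sum_singleton]⟩⟩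
    intro hc
    rw [← hc] at hd0
    rw [Finset.sum_singleton] at hd0
    · linarith
  -- slack of a negative-direction nest is strictly positive
  have hslack : ∀ N ∈ negSet, ((ccZ ω (nestVtx t N) : ℤ) : ℝ) < ∑ i ∈ N, x i := by
    intro N hNneg
    obtain ⟨hN, hNu, hNd⟩ := (hmemneg N).1 hNneg
    have hge := hx.2 N hN hNu
    rcases lt_or_eq_of_le hge with h | h
    · exact h
    · exfalso
      have hmem : N ∈ tightFam t ω x := (mem_tightFam t ω).2 (Or.inr ⟨hN, hNu, h.symm⟩)
      have := hdT N hmem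
      linarith
  set ratio : Finset (Fin (n-1)) → ℝ :=
    fun N => ((∑ i ∈ N, x i) - ((ccZ ω (nestVtx t N) : ℤ) : ℝ)) / (- ∑ i ∈ N, d i) with hratio
  set s : ℝ := negSet.inf' hne ratio with hs
  have hspos : 0 < s := by
    rw [hs, Finset.lt_inf'_iff]
    intro N hNneg
    obtain ⟨-, -, hNd⟩ := (hmemneg N).1 hNneg
    apply div_pos
    · have := hslack N hNneg; linarith
    · linarith
  set y : Vec (n-1) := x + s • d with hy
  have hysum : ∀ N : Finset (Fin (n-1)), ∑ i ∈ N, y i = ∑ i ∈ N, x i + s * ∑ i ∈ N, d i := by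
    intro N
    rw [hy]
    simp only [Pi.add_apply, Pi.smul_apply, smul_eq_mul]
    rw [Finset.sum_add_distrib, Finset.mul_sum]
  have hyQ : y ∈ QSet t ω := by
    constructor
    · have : ∑ i, y i = ∑ i ∈ Finset.univ, y i := rfl
      rw [this, hysum]
      have h2 : ∑ i ∈ Finset.univ, d i = 0 := hd0
      rw [h2, mul_zero, add_zero]
      exact hx.1
    · intro N hN hNu
      rw [hysum]
      by_cases hsgn : 0 ≤ ∑ i ∈ N, d i
      · have := hx.2 N hN hNu
        nlinarith
      · push_neg at hsgn
        have hNneg : N ∈ negSet := (hmemneg N).2 ⟨hN, hNu, hsgn⟩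
        have hle : s ≤ ratio N := by
          rw [hs]
          exact Finset.inf'_le ratio hNneg
        rw [hratio] at hle
        have hpos : 0 < - ∑ i ∈ N, d i := by linarith
        have := (le_div_iff₀ hpos).1 hle
        rw [mul_neg] at this
        linarith
  -- the minimizing nest becomes tight
  obtain ⟨Nstar, hNstar, hsval⟩ := Finset.exists_mem_eq_inf' hne ratio
  obtain ⟨hNs, hNsu, hNsd⟩ := (hmemneg Nstar).1 hNstar
  have hNstight : ∑ i ∈ Nstar, y i = ((ccZ ω (nestVtx t Nstar) : ℤ) : ℝ) := by
    rw [hysum]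
    rw [hs, hsval, hratio]
    have hdne : (∑ i ∈ Nstar, d i) ≠ 0 := by linarith
    field_simp
    ring
  have hbadsub : badSet t ω y ⊆ badSet t ω x := by
    intro N hNy
    rw [mem_badSet] at hNy ⊢
    obtain ⟨hN, hNu, hNne⟩ := hNy
    refine ⟨hN, hNu, ?_⟩
    intro heq
    apply hNne
    have hmem : N ∈ tightFam t ω x := (mem_tightFam t ω).2 (Or.inr ⟨hN, hNu, heq⟩)
    rw [hysum, hdT N hmem, mul_zero, add_zero]
    exact heq
  have hNsx : Nstar ∈ badSet t ω x := by
    rw [mem_badSet]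
    exact ⟨hNs, hNsu, ne_of_gt (hslack Nstar hNstar)⟩
  have hNsy : Nstar ∉ badSet t ω y := by
    rw [mem_badSet]
    rintro ⟨-, -, hc⟩
    exact hc hNstight
  refine ⟨y, hyQ, ?_, s, hspos, rfl⟩
  apply Finset.card_lt_card
  rw [Finset.ssubset_iff_of_subset hbadsub]
  exact ⟨Nstar, hNsx, hNsy⟩

/-- if the tight constraints span, `x` is a vertex -/
lemma top_case (hn : 2 ≤ n) (hω : ∀ j, 0 < ω j) {x : Vec (n-1)} (hx : x ∈ QSet t ω)
    (hspan : Submodule.span ℝ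
      (Set.image indV ((tightFam t ω x : Finset (Finset (Fin (n-1)))) : Set (Finset (Fin (n-1)))))
      = ⊤) : x ∈ Loday t ω := by
  have hnesting : IsNesting t (tightFam t ω x) := tight_isNesting t ω hn hω hx
  have hcardle : (tightFam t ω x).card ≤ n - 1 := nesting_card_le t hn hnesting
  have hcardge : n - 1 ≤ (tightFam t ω x).card := card_ge_of_spanning hspan
  have hmax : IsMaxNesting t (tightFam t ω x) := ⟨hnesting, le_antisymm hcardle hcardge⟩
  have hxM : x = MPoint t (tightFam t ω x) ω := by
    apply eq_of_spanning hspan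
    intro N hN
    rw [tightFam_sum t ω hn hx hN, sum_MPoint_cast]
    rw [Int.cast_inj]
    exact (sum_alphabeta_eq t ω hn hmax (nest_hNa t (tightFam_isNest t ω hN))
      (fun i hi => minNest_min t hnesting hN hi)).symm
  rw [hxM, Loday]
  apply subset_convexHull
  exact ⟨tightFam t ω x, hmax, rfl⟩

lemma QSet_subset_Loday (hn : 2 ≤ n) (hω : ∀ j, 0 < ω j) : QSet t ω ⊆ Loday t ω := by
  classical
  suffices h : ∀ m : ℕ, ∀ x ∈ QSet t ω, (badSet t ω x).card ≤ m → x ∈ Loday t ω by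
    intro x hx
    exact h (badSet t ω x).card x hx (le_refl _)
  intro m
  induction m with
  | zero =>
      intro x hx hcard
      by_cases hspan : Submodule.span ℝ
          (Set.image indV ((tightFam t ω x : Finset (Finset (Fin (n-1)))) :
            Set (Finset (Fin (n-1))))) = ⊤
      · exact top_case t ω hn hω hx hspan
      · exfalso
        obtain ⟨d, hdne, hdperp⟩ := exists_perp _ hspan
        have hdT : ∀ N ∈ tightFam t ω x, ∑ i ∈ N, d i = 0 := by
          intro N hN
          rw [← sum_eq_dot_ind]
          have : indV N ∈ Set.image indV ((tightFam t ω x : Finset (Finset (Fin (n-1)))) :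
              Set (Finset (Fin (n-1)))) := ⟨N, hN, rfl⟩
          exact hdperp (indV N) (Submodule.subset_span this)
        have hd0 : ∑ i, d i = 0 := by
          have := hdT Finset.univ ((mem_tightFam t ω).2 (Or.inl rfl))
          exact this
        have hineg : ∃ i0, d i0 < 0 := by
          by_contra hcon
          push_neg at hcon
          apply hdne
          funext i
          have := (Finset.sum_eq_zero_iff_of_nonneg (fun i _ => hcon i)).1 hd0 i (Finset.mem_univ i)
          exact this
        obtain ⟨i0, hi0⟩ := hineg
        obtain ⟨y, hyQ, hycard, -⟩ := move_lemma t ω hn hω hx hd0 hdT hi0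
        omega
  | succ m ih =>
      intro x hx hcard
      by_cases hspan : Submodule.span ℝ
          (Set.image indV ((tightFam t ω x : Finset (Finset (Fin (n-1)))) :
            Set (Finset (Fin (n-1))))) = ⊤
      · exact top_case t ω hn hω hx hspan
      · obtain ⟨d, hdne, hdperp⟩ := exists_perp _ hspan
        have hdT : ∀ N ∈ tightFam t ω x, ∑ i ∈ N, d i = 0 := by
          intro N hN
          rw [← sum_eq_dot_ind]
          have : indV N ∈ Set.image indV ((tightFam t ω x : Finset (Finset (Fin (n-1)))) :
              Set (Finset (Fin (n-1)))) := ⟨N, hN, rfl⟩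
          exact hdperp (indV N) (Submodule.subset_span this)
        have hd0 : ∑ i, d i = 0 := hdT Finset.univ ((mem_tightFam t ω).2 (Or.inl rfl))
        have hineg : ∃ i0, d i0 < 0 := by
          by_contra hcon
          push_neg at hcon
          apply hdne
          funext i
          exact (Finset.sum_eq_zero_iff_of_nonneg (fun i _ => hcon i)).1 hd0 i (Finset.mem_univ i)
        have hipos : ∃ i1, 0 < d i1 := by
          by_contra hcon
          push_neg at hcon
          apply hdne
          funext i
          exact (Finset.sum_eq_zero_iff_of_nonpos (fun j _ => hcon j)).1 hd0 i (Finset.mem_univ i)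
        obtain ⟨i0, hi0⟩ := hineg
        obtain ⟨i1, hi1pre⟩ := hipos
        have hi1 : (-d) i1 < 0 := by simp only [Pi.neg_apply]; linarith
        have hd0' : ∑ i, (-d) i = 0 := by
          simp only [Pi.neg_apply]
          rw [Finset.sum_neg_distrib, hd0, neg_zero]
        have hdT' : ∀ N ∈ tightFam t ω x, ∑ i ∈ N, (-d) i = 0 := by
          intro N hN
          simp only [Pi.neg_apply]
          rw [Finset.sum_neg_distrib, hdT N hN, neg_zero]
        obtain ⟨y1, hy1Q, hy1card, s1, hs1pos, hy1⟩ := move_lemma t ω hn hω hx hd0 hdT hi0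
        obtain ⟨y2, hy2Q, hy2card, s2, hs2pos, hy2⟩ := move_lemma t ω hn hω hx hd0' hdT' hi1
        have hy1L : y1 ∈ Loday t ω := ih y1 hy1Q (by omega)
        have hy2L : y2 ∈ Loday t ω := ih y2 hy2Q (by omega)
        -- x is a convex combination of y1 and y2
        set a : ℝ := s2 / (s1 + s2) with ha
        set b : ℝ := s1 / (s1 + s2) with hb
        have hab : a + b = 1 := by
          rw [ha, hb, ← add_div]
          field_simp
          ring
        have hapos : 0 ≤ a := le_of_lt (div_pos hs2pos (by linarith))
        have hbpos : 0 ≤ b := le_of_lt (div_pos hs1pos (by linarith))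
        have hcomb : a • y1 + b • y2 = x := by
          rw [hy1, hy2]
          funext i
          simp only [Pi.add_apply, Pi.smul_apply, smul_eq_mul, Pi.neg_apply]
          have hsum : s1 + s2 ≠ 0 := by linarith
          rw [ha, hb]
          field_simp
          ring
        rw [← hcomb]
        exact (convex_convexHull ℝ _) hy1L hy2L hapos hbpos hab

end MainArgument
/-- For any planar tree `t ∈ PT_n` and any weight `ω` of length `n`, the Loday
realization `P_{(t,ω)} ⊆ ℝ^{n-1}`: (1) is contained in the hyperplane
`Σ_{i ∈ E(t)} x_i = Σ_{k<ℓ} ω_k ω_ℓ`; (2) for every nontrivial nest `N` and every maximal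
nesting `𝒩`, the point `M(t,𝒩,ω)` satisfies
`Σ_{i ∈ E(t(N))} x_i ≥ Σ_{k<ℓ ∈ V(t(N))} ω_k ω_ℓ`, with equality iff `N ∈ 𝒩`; and (3) equals
the intersection of the hyperplane of (1) with the half-spaces of (2). -/
theorem stmt13 {n : ℕ} (hn : 2 ≤ n) (t : PTree n) (ω : Fin n → ℤ) (hω : ∀ j, 0 < ω j) :
    (Loday t ω ⊆ {x : Vec (n - 1) |
        (∑ i, x i) =
          ((∑ p ∈ Finset.univ.filter (fun p : Fin n × Fin n => p.1 < p.2),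
              ω p.1 * ω p.2 : ℤ) : ℝ)}) ∧
    (∀ N : Finset (Fin (n - 1)), IsNest t N → N ≠ Finset.univ →
      ∀ 𝒩, IsMaxNesting t 𝒩 →
        (((∑ p ∈ (nestVtx t N ×ˢ nestVtx t N).filter (fun p => p.1 < p.2),
              ω p.1 * ω p.2 : ℤ) : ℝ) ≤ ∑ i ∈ N, MPoint t 𝒩 ω i) ∧
        ((∑ i ∈ N, MPoint t 𝒩 ω i) =
            ((∑ p ∈ (nestVtx t N ×ˢ nestVtx t N).filter (fun p => p.1 < p.2),
              ω p.1 * ω p.2 : ℤ) : ℝ) ↔ N ∈ 𝒩)) ∧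
    (Loday t ω = {x : Vec (n - 1) |
        (∑ i, x i) =
          ((∑ p ∈ Finset.univ.filter (fun p : Fin n × Fin n => p.1 < p.2),
              ω p.1 * ω p.2 : ℤ) : ℝ) ∧
        ∀ N : Finset (Fin (n - 1)), IsNest t N → N ≠ Finset.univ →
          ((∑ p ∈ (nestVtx t N ×ˢ nestVtx t N).filter (fun p => p.1 < p.2),
              ω p.1 * ω p.2 : ℤ) : ℝ) ≤ ∑ i ∈ N, x i}) := by
  constructor
  · -- (1) the Loday realization lies in the hyperplane
    intro x hx
    exact (Loday_subset_QSet t ω hn hω hx).1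
  constructor
  · -- (2) the defining inequalities and the equality characterization
    intro N hN hNu 𝒩 h𝒩
    constructor
    · rw [sum_MPoint_cast]
      show ((ccZ ω (nestVtx t N) : ℤ) : ℝ) ≤ _
      exact_mod_cast sum_alphabeta_ge t ω hω hn h𝒩 hN
    · rw [sum_MPoint_cast]
      show ((∑ i ∈ N, alphaN t 𝒩 ω i * betaN t 𝒩 ω i : ℤ) : ℝ)
        = ((ccZ ω (nestVtx t N) : ℤ) : ℝ) ↔ N ∈ 𝒩
      rw [Int.cast_inj]
      exact sum_alphabeta_eq_iff t ω hω hn h𝒩 hN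
  · -- (3) the H-description
    show Loday t ω = QSet t ω
    apply Set.Subset.antisymm
    · exact Loday_subset_QSet t ω hn hω
    · exact QSet_subset_Loday t ω hn hω
end
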